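/- arXiv:1011.2266 — 12 statements merged into one kernel-verified Lean document; each statement's English description precedes it below -/
import Mathlib

section
/- Let X be a convexity space. For all points x, y ∈ X, the set C(x,y) \ {y} is connected. -/
/-- A set `A` is convex with respect to the map `C` assigning to each pair of points
`x, y` the set `C x y` ("the minimal connected set joining them") if `C u v ⊆ A`
whenever `u, v ∈ A`. -/
def ConvexWRT {X : Type*} (C : X → X → Set X) (A : Set X) : Prop :=
  ∀ u ∈ A, ∀ v ∈ A, C u v ⊆ A

/-- A convexity space is a Hausdorff topological space `X` together with a map
`C : X → X → Set X` which is continuous as a map `X × X → 𝒫(X)` (where `𝒫(X)` carries the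
topology generated by the sets `{C | C ⊆ U}`, `U` open), such that
(C1) each `C x y` is convex, (C2) each `C x y` is minimal among the connected subsets of `X`
containing both `x` and `y`, and (C3) `X` has a basis of convex open sets. -/
structure IsConvexitySpace {X : Type*} [TopologicalSpace X] [T2Space X]
    (C : X → X → Set X) : Prop where
  /-- `C x y` contains `x`. -/
  mem_left : ∀ x y : X, x ∈ C x y
  /-- `C x y` contains `y`. -/
  mem_right : ∀ x y : X, y ∈ C x y
  /-- `C x y` is connected. -/
  preconnected : ∀ x y : X, IsPreconnected (C x y)
  /-- (C1): `C x y` is convex. -/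
  convex : ∀ x y : X, ConvexWRT C (C x y)
  /-- (C2): `C x y` is minimal among the connected subsets of `X` containing `x` and `y`:
  no proper subset of `C x y` containing `x` and `y` is connected. -/
  minimal : ∀ x y : X, ∀ A : Set X, A ⊆ C x y → x ∈ A → y ∈ A →
    IsPreconnected A → A = C x y
  /-- Continuity of `(x, y) ↦ C x y`: for every open `W ⊇ C x y` there are open
  neighbourhoods `V` of `x` and `V'` of `y` with `C x' y' ⊆ W` for `x' ∈ V`, `y' ∈ V'`. -/
  continuity : ∀ x y : X, ∀ W : Set X, IsOpen W → C x y ⊆ W →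
    ∃ V V' : Set X, IsOpen V ∧ IsOpen V' ∧ x ∈ V ∧ y ∈ V' ∧
      ∀ x' ∈ V, ∀ y' ∈ V', C x' y' ⊆ W
  /-- (C3): `X` has a basis of convex open sets. -/
  basis : ∀ x : X, ∀ W : Set X, IsOpen W → x ∈ W →
    ∃ V : Set X, IsOpen V ∧ x ∈ V ∧ V ⊆ W ∧ ConvexWRT C V

private lemma C_self {X : Type*} [TopologicalSpace X] [T2Space X] {C : X → X → Set X}
    (hC : IsConvexitySpace C) (x : X) : C x x = {x} :=
  (hC.minimal x x {x} (Set.singleton_subset_iff.mpr (hC.mem_left x x)) rfl rfl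
    isPreconnected_singleton).symm

private lemma antisym {X : Type*} [TopologicalSpace X] [T2Space X] {C : X → X → Set X}
    (hC : IsConvexitySpace C) {x y z : X} (hz : z ∈ C x y) (hy : y ∈ C x z) : y = z := by
  by_contra hne
  have hxy : x ≠ y := by
    rintro rfl
    rw [C_self hC x] at hz
    exact hne hz.symm
  -- the "strictly below y" part of C x y
  set G : Set X := {w | w ∈ C x y ∧ y ∉ C x w} with hGdef
  have hxG : x ∈ G := ⟨hC.mem_left x y, by rw [C_self hC x]; exact fun h => hxy h.symm⟩
  have hyG : y ∉ G := fun h => h.2 (hC.mem_right x y)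
  have hGdown : ∀ w ∈ G, C x w ⊆ G := by
    intro w hw u hu
    refine ⟨hC.convex x y x (hC.mem_left x y) w hw.1 hu, fun hyu => hw.2 ?_⟩
    exact hC.convex x w x (hC.mem_left x w) u hu hyu
  have hGpre : IsPreconnected G := by
    have hGeq : G = ⋃₀ {s | ∃ w ∈ G, s = C x w} := by
      apply Set.Subset.antisymm
      · intro w hw
        exact Set.mem_sUnion.mpr ⟨C x w, ⟨w, hw, rfl⟩, hC.mem_right x w⟩
      · intro u hu
        rcases Set.mem_sUnion.mp hu with ⟨s, ⟨w, hw, rfl⟩, hus⟩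
        exact hGdown w hw hus
    rw [hGeq]
    exact isPreconnected_sUnion x _ (fun s ⟨w, _, hs⟩ => hs ▸ hC.mem_left x w)
      (fun s ⟨w, _, hs⟩ => hs ▸ hC.preconnected x w)
  -- G is relatively open in C x y
  have hVopen : ∀ w ∈ G, ∃ V' : Set X, IsOpen V' ∧ w ∈ V' ∧ ∀ u ∈ V', u ∈ C x y → u ∈ G := by
    intro w hw
    have hsub : C x w ⊆ {y}ᶜ := fun u hu hyu => hw.2 (Set.mem_singleton_iff.mp hyu ▸ hu)
    obtain ⟨V, V', hV, hV', hxV, hwV', hcont⟩ :=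
      hC.continuity x w {y}ᶜ isOpen_compl_singleton hsub
    exact ⟨V', hV', hwV', fun u huV' huA =>
      ⟨huA, fun hyu => hcont x hxV u huV' hyu rfl⟩⟩
  choose! f hf1 hf2 hf3 using hVopen
  set U : Set X := ⋃ w ∈ G, f w with hUdef
  have hUopen : IsOpen U := isOpen_biUnion fun w hw => hf1 w hw
  have hGU : G ⊆ U := fun w hw => Set.mem_biUnion hw (hf2 w hw)
  have hUA : ∀ u ∈ U, u ∈ C x y → u ∈ G := by
    intro u hu huA
    rcases Set.mem_iUnion₂.mp hu with ⟨w, hw, huw⟩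
    exact hf3 w hw u huw huA
  -- find a boundary point p of G inside C x y
  have hp : ∃ p, p ∈ closure G ∧ p ∈ C x y ∧ p ∉ G := by
    by_contra h
    push_neg at h
    have hycl : y ∉ closure G := fun hy' => hyG (h y hy' (hC.mem_right x y))
    have := hC.preconnected x y U (closure G)ᶜ hUopen isClosed_closure.isOpen_compl
      (fun a ha => by
        by_cases hacl : a ∈ closure G
        · exact Or.inl (hGU (h a hacl ha))
        · exact Or.inr hacl)
      ⟨x, hC.mem_left x y, hGU hxG⟩ ⟨y, hC.mem_right x y, hycl⟩
    rcases this with ⟨a, haA, haU, hacl⟩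
    exact hacl (subset_closure (hUA a haU haA))
  obtain ⟨p, hpcl, hpA, hpG⟩ := hp
  have hyCp : y ∈ C x p := by
    by_contra h
    exact hpG ⟨hpA, h⟩
  have hCxp : C x p = C x y :=
    Set.Subset.antisymm (hC.convex x y x (hC.mem_left x y) p hpA)
      (hC.convex x p x (hC.mem_left x p) y hyCp)
  have hBpre : IsPreconnected (insert p G) :=
    hGpre.subset_closure (Set.subset_insert p G)
      (Set.insert_subset_iff.mpr ⟨hpcl, subset_closure⟩)
  have hBsub : insert p G ⊆ C x p := by
    rw [hCxp]
    exact Set.insert_subset_iff.mpr ⟨hpA, fun w hw => hw.1⟩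
  have hBeq : insert p G = C x p :=
    hC.minimal x p (insert p G) hBsub (Set.mem_insert_of_mem p hxG) (Set.mem_insert p G) hBpre
  have hyB : y ∈ insert p G := by rw [hBeq, hCxp]; exact hC.mem_right x y
  have hzB : z ∈ insert p G := by rw [hBeq, hCxp]; exact hz
  have hyp : y = p := (Set.mem_insert_iff.mp hyB).resolve_right fun h => hyG h
  have hzp : z = p := (Set.mem_insert_iff.mp hzB).resolve_right fun h => h.2 hy
  exact hne (hyp.trans hzp.symm)

/-- Lemma 1: Let `X` be a convexity space. For all points `x, y ∈ X`,
the set `C(x,y) \ {y}` is connected. -/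
theorem stmt_0 {X : Type*} [TopologicalSpace X] [T2Space X] {C : X → X → Set X}
    (hC : IsConvexitySpace C) (x y : X) :
    IsPreconnected (C x y \ {y}) := by
  by_cases hxy : x = y
  · subst hxy
    rw [C_self hC x]
    have : ({x} : Set X) \ {x} = ∅ := Set.diff_self
    rw [this]
    exact isPreconnected_empty
  · have key : C x y \ {y} = ⋃₀ {s | ∃ z ∈ C x y \ {y}, s = C x z} := by
      apply Set.Subset.antisymm
      · intro z hz
        exact Set.mem_sUnion.mpr ⟨C x z, ⟨z, hz, rfl⟩, hC.mem_right x z⟩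
      · intro u hu
        rcases Set.mem_sUnion.mp hu with ⟨s, ⟨z, hz, rfl⟩, hus⟩
        refine ⟨hC.convex x y x (hC.mem_left x y) z hz.1 hus, fun h => ?_⟩
        exact hz.2 (antisym hC hz.1 (Set.mem_singleton_iff.mp h ▸ hus) ▸ rfl)
    rw [key]
    exact isPreconnected_sUnion x _ (fun s ⟨z, _, hs⟩ => hs ▸ hC.mem_left x z)
      (fun s ⟨z, _, hs⟩ => hs ▸ hC.preconnected x z)
end

section
/- Let X be a convexity space and x, y ∈ X. The relation defined for z, t ∈ C(x,y) by z ≤ t iff z ∈ C(x,t) is a linear order on C(x,y); moreover, for z, t ∈ C(x,y) one has z ∈ C(x,t) if and only if t ∈ C(z,y). -/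
set_option linter.unusedSectionVars false
set_option linter.unusedVariables false

section Aux

variable {X : Type*} [TopologicalSpace X] [T2Space X] {C : X → X → Set X}

lemma csymm (hC : IsConvexitySpace C) (x y : X) : C x y = C y x :=
  subset_antisymm (hC.convex y x x (hC.mem_right y x) y (hC.mem_left y x))
    (hC.convex x y y (hC.mem_right x y) x (hC.mem_left x y))

lemma cself (hC : IsConvexitySpace C) (x : X) : C x x = {x} :=
  (hC.minimal x x {x} (Set.singleton_subset_iff.2 (hC.mem_left x x)) rfl rfl
    isPreconnected_singleton).symm

lemma csplit (hC : IsConvexitySpace C) {x y z : X} (hz : z ∈ C x y) :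
    C x z ∪ C z y = C x y := by
  apply hC.minimal x y
  · exact Set.union_subset (hC.convex x y x (hC.mem_left x y) z hz)
      (hC.convex x y z hz y (hC.mem_right x y))
  · exact Or.inl (hC.mem_left x z)
  · exact Or.inr (hC.mem_right z y)
  · exact IsPreconnected.union z (hC.mem_right x z) (hC.mem_left z y)
      (hC.preconnected x z) (hC.preconnected z y)

/-- Auxiliary step for `cut_side`: contradiction derivation assuming `t ∈ u₁`. -/
lemma cut_side_aux {s u v u₁ u₂ : Set X} {t : X} (hs : IsPreconnected s) (ht : t ∈ s)
    (hu : IsOpen u) (hv : IsOpen v) (hcov : s \ {t} ⊆ u ∪ v)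
    (hdisj : (s \ {t}) ∩ (u ∩ v) = ∅)
    (ho₁ : IsOpen u₁) (ho₂ : IsOpen u₂)
    (hPcov : (s \ {t}) ∩ u ∪ {t} ⊆ u₁ ∪ u₂)
    (hcon : ((s \ {t}) ∩ u ∪ {t}) ∩ (u₁ ∩ u₂) = ∅)
    (ht1 : t ∈ u₁)
    (hne₂ : (((s \ {t}) ∩ u ∪ {t}) ∩ u₂).Nonempty) : False := by
  set P := (s \ {t}) ∩ u ∪ {t} with hPdef
  have hcover : s ⊆ (u₁ ∪ v) ∪ (u₂ ∩ u) := by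
    intro p hp
    by_cases hpt : p = t
    · subst hpt; exact Or.inl (Or.inl ht1)
    · have hp' : p ∈ s \ {t} := ⟨hp, hpt⟩
      rcases hcov hp' with hpu | hpv
      · have hpP : p ∈ P := Or.inl ⟨hp', hpu⟩
        rcases hPcov hpP with h1 | h2
        · exact Or.inl (Or.inl h1)
        · exact Or.inr ⟨h2, hpu⟩
      · exact Or.inl (Or.inr hpv)
  have hne1 : (s ∩ (u₁ ∪ v)).Nonempty := ⟨t, ht, Or.inl ht1⟩
  have hne2 : (s ∩ (u₂ ∩ u)).Nonempty := by
    obtain ⟨p, hpP, hpu₂⟩ := hne₂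
    have hpt : p ≠ t := by
      rintro rfl
      exact Set.eq_empty_iff_forall_notMem.1 hcon p ⟨hpP, ht1, hpu₂⟩
    rcases hpP with hpP | hpt'
    · exact ⟨p, hpP.1.1, hpu₂, hpP.2⟩
    · exact absurd hpt' hpt
  obtain ⟨q, hqs, hq1, hq2, hqu⟩ := hs (u₁ ∪ v) (u₂ ∩ u) (ho₁.union hv) (ho₂.inter hu)
    hcover hne1 hne2
  by_cases hqt : q = t
  · subst hqt
    rcases hq1 with hq1 | hqv
    · exact Set.eq_empty_iff_forall_notMem.1 hcon q ⟨Or.inr rfl, hq1, hq2⟩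
    · exact Set.eq_empty_iff_forall_notMem.1 hcon q ⟨Or.inr rfl, ht1, hq2⟩
  · have hq' : q ∈ s \ {t} := ⟨hqs, hqt⟩
    rcases hq1 with hq1 | hqv
    · exact Set.eq_empty_iff_forall_notMem.1 hcon q ⟨Or.inl ⟨hq', hqu⟩, hq1, hq2⟩
    · exact Set.eq_empty_iff_forall_notMem.1 hdisj q ⟨hq', hqu, hqv⟩

/-- If `s` is preconnected, `t ∈ s`, and `u, v` separate `s \ {t}`, then the `u`-side
together with `t` is preconnected. -/
lemma cut_side {s u v : Set X} {t : X} (hs : IsPreconnected s) (ht : t ∈ s)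
    (hu : IsOpen u) (hv : IsOpen v) (hcov : s \ {t} ⊆ u ∪ v)
    (hdisj : (s \ {t}) ∩ (u ∩ v) = ∅) (hvne : ((s \ {t}) ∩ v).Nonempty) :
    IsPreconnected ((s \ {t}) ∩ u ∪ {t}) := by
  intro u₁ u₂ ho₁ ho₂ hPcov hne₁ hne₂
  by_contra hcon
  rw [Set.not_nonempty_iff_eq_empty] at hcon
  have htP : t ∈ (s \ {t}) ∩ u ∪ {t} := Or.inr rfl
  rcases hPcov htP with ht1 | ht2
  · exact cut_side_aux hs ht hu hv hcov hdisj ho₁ ho₂ hPcov hcon ht1 hne₂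
  · have hPcov' : (s \ {t}) ∩ u ∪ {t} ⊆ u₂ ∪ u₁ := by
      intro p hp; rcases hPcov hp with h | h
      exacts [Or.inr h, Or.inl h]
    have hcon' : ((s \ {t}) ∩ u ∪ {t}) ∩ (u₂ ∩ u₁) = ∅ := by
      rw [Set.inter_comm u₂ u₁]; exact hcon
    exact cut_side_aux hs ht hu hv hcov hdisj ho₂ ho₁ hPcov' hcon' ht2 hne₁

/-- Auxiliary step for `core`: given a separation of `C x z \ {t}` with `x` in `u`,
derive a contradiction. -/
lemma core_aux (hC : IsConvexitySpace C) {x z t : X} {u v : Set X}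
    (hzt : z ∈ C x t) (htz : t ∈ C x z) (hne : z ≠ t)
    (hD : C x z = C x t)
    (hu : IsOpen u) (hv : IsOpen v) (hcov : C x z \ {t} ⊆ u ∪ v)
    (hi : (C x z \ {t}) ∩ (u ∩ v) = ∅)
    (hune : ((C x z \ {t}) ∩ u).Nonempty) (hvne : ((C x z \ {t}) ∩ v).Nonempty)
    (hxu : x ∈ u) (hxm : x ∈ C x z \ {t}) (hzm : z ∈ C x z \ {t}) : False := by
  have hPu : IsPreconnected ((C x z \ {t}) ∩ u ∪ {t}) :=
    cut_side (hC.preconnected x z) htz hu hv hcov hi hvne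
  have hPsub : (C x z \ {t}) ∩ u ∪ {t} ⊆ C x z :=
    Set.union_subset (Set.inter_subset_left.trans Set.diff_subset)
      (Set.singleton_subset_iff.2 htz)
  by_cases hzu : z ∈ u
  · have heq := hC.minimal x z _ hPsub (Or.inl ⟨hxm, hxu⟩) (Or.inl ⟨hzm, hzu⟩) hPu
    obtain ⟨q, hq, hqv⟩ := hvne
    have hqP : q ∈ (C x z \ {t}) ∩ u ∪ {t} := heq.symm ▸ hq.1
    rcases hqP with hqP | hqt
    · exact Set.eq_empty_iff_forall_notMem.1 hi q ⟨hq, hqP.2, hqv⟩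
    · exact hq.2 hqt
  · have hzv : z ∈ v := by rcases hcov hzm with h | h; exacts [absurd h hzu, h]
    have hPsub' : (C x z \ {t}) ∩ u ∪ {t} ⊆ C x t := hD ▸ hPsub
    have heq := hC.minimal x t _ hPsub' (Or.inl ⟨hxm, hxu⟩) (Or.inr rfl) hPu
    have hzP : z ∈ (C x z \ {t}) ∩ u ∪ {t} := by
      rw [heq, ← hD]; exact hC.mem_right x z
    rcases hzP with hzP | hzt'
    · exact Set.eq_empty_iff_forall_notMem.1 hi z ⟨hzm, hzP.2, hzv⟩
    · exact hne hzt'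

/-- The core lemma: if `z ∈ C x t` and `t ∈ C x z` then `z = t`. -/
lemma core (hC : IsConvexitySpace C) {x z t : X} (hzt : z ∈ C x t) (htz : t ∈ C x z) :
    z = t := by
  by_contra hne
  by_cases hxz : x = z
  · subst hxz
    rw [cself hC] at htz
    exact hne htz.symm
  by_cases hxt : x = t
  · subst hxt
    rw [cself hC] at hzt
    exact hne hzt
  have hD : C x z = C x t :=
    subset_antisymm (hC.convex x t x (hC.mem_left x t) z hzt)
      (hC.convex x z x (hC.mem_left x z) t htz)
  have hxm : x ∈ C x z \ {t} := ⟨hC.mem_left x z, hxt⟩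
  have hzm : z ∈ C x z \ {t} := ⟨hC.mem_right x z, hne⟩
  have hnp : ¬ IsPreconnected (C x z \ {t}) := by
    intro h
    have heq := hC.minimal x z _ Set.diff_subset hxm hzm h
    have : t ∈ C x z \ {t} := heq.symm ▸ htz
    exact this.2 rfl
  unfold IsPreconnected at hnp
  push_neg at hnp
  obtain ⟨u, v, hu, hv, hcov, hune, hvne, hi⟩ := hnp
  rcases hcov hxm with hxu | hxv
  · exact core_aux hC hzt htz hne hD hu hv hcov hi hune hvne hxu hxm hzm
  · have hcov' : C x z \ {t} ⊆ v ∪ u := by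
      intro p hp; rcases hcov hp with h | h
      exacts [Or.inr h, Or.inl h]
    have hi' : (C x z \ {t}) ∩ (v ∩ u) = ∅ := by
      rw [Set.inter_comm v u]; exact hi
    exact core_aux hC hzt htz hne hD hv hu hcov' hi' hvne hune hxv hxm hzm

lemma fwd (hC : IsConvexitySpace C) {x y z t : X} (hz : z ∈ C x y) (ht : t ∈ C x y)
    (h : z ∈ C x t) : t ∈ C z y := by
  rw [← csplit hC hz] at ht
  rcases ht with ht | ht
  · have := core hC h ht
    rw [← this]
    exact hC.mem_left z y
  · exact ht

end Aux

/-- Proposition 1: Let `X` be a convexity space and `x, y ∈ X`. The relation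
defined for `z, t ∈ C(x,y)` by `z ≤ t` iff `z ∈ C(x,t)` is a linear order on `C(x,y)`
(reflexive, antisymmetric, transitive, total); moreover, for `z, t ∈ C(x,y)` one has
`z ∈ C(x,t)` if and only if `t ∈ C(z,y)`. -/
theorem stmt_1 {X : Type*} [TopologicalSpace X] [T2Space X] {C : X → X → Set X}
    (hC : IsConvexitySpace C) (x y : X) :
    (∀ z ∈ C x y, z ∈ C x z) ∧
    (∀ z ∈ C x y, ∀ t ∈ C x y, z ∈ C x t → t ∈ C x z → z = t) ∧
    (∀ z ∈ C x y, ∀ t ∈ C x y, ∀ s ∈ C x y, z ∈ C x t → t ∈ C x s → z ∈ C x s) ∧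
    (∀ z ∈ C x y, ∀ t ∈ C x y, z ∈ C x t ∨ t ∈ C x z) ∧
    (∀ z ∈ C x y, ∀ t ∈ C x y, (z ∈ C x t ↔ t ∈ C z y)) := by
  refine ⟨?_, ?_, ?_, ?_, ?_⟩
  · intro z _
    exact hC.mem_right x z
  · intro z _ t _ hzt htz
    exact core hC hzt htz
  · intro z _ t _ s _ hzt hts
    exact hC.convex x s x (hC.mem_left x s) t hts hzt
  · intro z hz t ht
    have hz' := hz
    rw [← csplit hC ht] at hz'
    rcases hz' with hz' | hz'
    · exact Or.inl hz'
    · have ht' := ht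
      rw [← csplit hC hz] at ht'
      rcases ht' with ht' | ht'
      · exact Or.inr ht'
      · -- z ∈ C t y and t ∈ C z y  ⇒ z = t
        have h1 : z ∈ C y t := by rw [csymm hC y t]; exact hz'
        have h2 : t ∈ C y z := by rw [csymm hC y z]; exact ht'
        have := core hC h1 h2
        subst this
        exact Or.inl (hC.mem_right x z)
  · intro z hz t ht
    constructor
    · exact fun h => fwd hC hz ht h
    · intro h
      have hz' : z ∈ C y x := by rw [← csymm hC x y]; exact hz
      have ht' : t ∈ C y x := by rw [← csymm hC x y]; exact ht
      have h' : t ∈ C y z := by rw [csymm hC y z]; exact h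
      have := fwd hC ht' hz' h'
      rw [csymm hC x t]
      exact this
end

section
/- Let X be a convexity space. For all points x, y ∈ X, the subspace C(x,y) of X is compact. -/
/-- part of Proposition 2: Let `X` be a convexity space. For all points
`x, y ∈ X`, the subspace `C(x,y)` of `X` is compact. -/
theorem stmt_2 {X : Type*} [TopologicalSpace X] [T2Space X] {C : X → X → Set X}
    (hC : IsConvexitySpace C) (x y : X) :
    IsCompact (C x y) := by
  classical
  obtain ⟨memL, memR, preconn, conv, minimal, -, basis⟩ := hC
  apply isCompact_of_finite_subcover
  intro ι U hUo hUc
  have hι : Nonempty ι := ⟨(Set.mem_iUnion.mp (hUc (memL x y))).choose⟩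
  -- choose convex open refinements
  have hchoice : ∀ z ∈ C x y, ∃ (i : ι) (V : Set X),
      IsOpen V ∧ z ∈ V ∧ V ⊆ U i ∧ ConvexWRT C V := by
    intro z hz
    obtain ⟨i, hi⟩ := Set.mem_iUnion.mp (hUc hz)
    obtain ⟨V, hVo, hzV, hVU, hVcx⟩ := basis z (U i) (hUo i) hi
    exact ⟨i, V, hVo, hzV, hVU, hVcx⟩
  choose! idx V hVo hzV hVU hVcx using hchoice
  -- the set of points reachable from x by a finitely covered connected subset
  set S : Set X := {z | z ∈ C x y ∧ ∃ A : Set X, IsPreconnected A ∧ x ∈ A ∧ z ∈ A ∧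
    A ⊆ C x y ∧ ∃ t : Finset ι, A ⊆ ⋃ i ∈ t, U i} with hS
  have hSsub : S ⊆ C x y := fun z hz => hz.1
  have hxS : x ∈ S := by
    refine ⟨memL x y, {x}, isPreconnected_singleton, rfl, rfl, ?_, {idx x}, ?_⟩
    · intro p hp; rw [Set.mem_singleton_iff] at hp; rw [hp]; exact memL x y
    · intro p hp; rw [Set.mem_singleton_iff] at hp; rw [hp]
      exact Set.mem_biUnion (Finset.mem_singleton_self _)
        (hVU x (memL x y) (hzV x (memL x y)))
  have key : ∀ z ∈ C x y, ∀ z' ∈ C x y, z' ∈ V z → z ∈ S → z' ∈ S := by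
    rintro z hz z' hz' hz'V ⟨-, A, hA, hxA, hzA, hAC, t, hAt⟩
    refine ⟨hz', A ∪ C z z',
      IsPreconnected.union z hzA (memL z z') hA (preconn z z'),
      Or.inl hxA, Or.inr (memR z z'), ?_, insert (idx z) t, ?_⟩
    · exact Set.union_subset hAC (conv x y z hz z' hz')
    · apply Set.union_subset
      · exact hAt.trans (Set.biUnion_subset_biUnion_left
          (fun i hi => Finset.mem_insert_of_mem hi))
      · intro p hp
        exact Set.mem_biUnion (Finset.mem_insert_self _ _)
          (hVU z hz (hVcx z hz z (hzV z hz) z' hz'V hp))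
  have key' : ∀ z ∈ C x y, ∀ z' ∈ C x y, z' ∈ V z → z' ∈ S → z ∈ S := by
    rintro z hz z' hz' hz'V ⟨-, A, hA, hxA, hz'A, hAC, t, hAt⟩
    refine ⟨hz, A ∪ C z' z,
      IsPreconnected.union z' hz'A (memL z' z) hA (preconn z' z),
      Or.inl hxA, Or.inr (memR z' z), ?_, insert (idx z) t, ?_⟩
    · exact Set.union_subset hAC (conv x y z' hz' z hz)
    · apply Set.union_subset
      · exact hAt.trans (Set.biUnion_subset_biUnion_left
          (fun i hi => Finset.mem_insert_of_mem hi))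
      · intro p hp
        exact Set.mem_biUnion (Finset.mem_insert_self _ _)
          (hVU z hz (hVcx z hz z' hz'V z (hzV z hz) hp))
  -- two open sets separating S and its complement in C x y
  set u : Set X := ⋃ z ∈ S, V z with hu
  set v : Set X := ⋃ z ∈ (C x y \ S), V z with hv
  have huo : IsOpen u := isOpen_biUnion fun z hz => hVo z (hSsub hz)
  have hvo : IsOpen v := isOpen_biUnion fun z hz => hVo z hz.1
  have hcover : C x y ⊆ u ∪ v := by
    intro z hz
    by_cases h : z ∈ S
    · exact Or.inl (Set.mem_biUnion h (hzV z hz))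
    · exact Or.inr (Set.mem_biUnion ⟨hz, h⟩ (hzV z hz))
  have hCuS : ∀ p ∈ C x y, p ∈ u → p ∈ S := by
    intro p hp hpu
    obtain ⟨z, hzS, hpV⟩ := Set.mem_iUnion₂.mp hpu
    exact key z (hSsub hzS) p hp hpV hzS
  have hCvS : ∀ p ∈ C x y, p ∈ v → p ∉ S := by
    intro p hp hpv hpS
    obtain ⟨z, hzCS, hpV⟩ := Set.mem_iUnion₂.mp hpv
    exact hzCS.2 (key' z hzCS.1 p hp hpV hpS)
  have hvempty : ¬ (C x y ∩ v).Nonempty := by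
    intro hne
    obtain ⟨p, hpC, hpu, hpv⟩ := preconn x y u v huo hvo hcover
      ⟨x, memL x y, Set.mem_biUnion hxS (hzV x (memL x y))⟩ hne
    exact hCvS p hpC hpv (hCuS p hpC hpu)
  have hyS : y ∈ S := by
    by_contra h
    exact hvempty ⟨y, memR x y, Set.mem_biUnion ⟨memR x y, h⟩ (hzV y (memR x y))⟩
  obtain ⟨-, A, hA, hxA, hyA, hAC, t, hAt⟩ := hyS
  have hAeq : A = C x y := minimal x y A hAC hxA hyA hA
  exact ⟨t, hAeq ▸ hAt⟩
end

section
/- Let X be a convexity space and x, y ∈ X. The subspace topology that C(x,y) inherits from X coincides with the order topology induced by the linear order on C(x,y) given by z ≤ t iff z ∈ C(x,t). -/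
namespace IsConvexitySpace

open Set TopologicalSpace

variable {X : Type*} [TopologicalSpace X] [T2Space X] {C : X → X → Set X}

/-- The axioms are symmetric in the two arguments of `C`. -/
theorem swap (hC : IsConvexitySpace C) : IsConvexitySpace (fun a b => C b a) where
  mem_left a b := hC.mem_right b a
  mem_right a b := hC.mem_left b a
  preconnected a b := hC.preconnected b a
  convex a b u hu v hv := hC.convex b a v hv u hu
  minimal a b A hA ha hb hp := hC.minimal b a A hA hb ha hp
  continuity a b W hW hsub := by
    obtain ⟨V, V', h1, h2, h3, h4, h5⟩ := hC.continuity b a W hW hsub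
    exact ⟨V', V, h2, h1, h4, h3, fun x' hx' y' hy' => h5 y' hy' x' hx'⟩
  basis p W hW hp := by
    obtain ⟨V, h1, h2, h3, h4⟩ := hC.basis p W hW hp
    exact ⟨V, h1, h2, h3, fun u hu v hv => h4 v hv u hu⟩

theorem single (hC : IsConvexitySpace C) (p : X) : C p p = {p} :=
  (hC.minimal p p {p} (singleton_subset_iff.2 (hC.mem_left p p)) rfl rfl
    isPreconnected_singleton).symm

theorem split (hC : IsConvexitySpace C) {p q b : X} (hb : b ∈ C p q) :
    C p b ∪ C b q = C p q :=
  hC.minimal p q _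
    (union_subset (hC.convex p q p (hC.mem_left p q) b hb)
      (hC.convex p q b hb q (hC.mem_right p q)))
    (Or.inl (hC.mem_left p b)) (Or.inr (hC.mem_right b q))
    ((hC.preconnected p b).union b (hC.mem_right p b) (hC.mem_left b q)
      (hC.preconnected b q))

theorem isOpen_notMem (hC : IsConvexitySpace C) (p a : X) :
    IsOpen {w : X | a ∉ C p w} := by
  rw [isOpen_iff_forall_mem_open]
  intro w hw
  obtain ⟨V, V', hV, hV', hp, hw', hsub⟩ := hC.continuity p w {a}ᶜ isOpen_compl_singleton
    (fun u hu hua => hw (by rw [mem_singleton_iff] at hua; rwa [hua] at hu))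
  exact ⟨V', fun w' hw'' ha => hsub p hp w' hw'' ha rfl, hV', hw'⟩

/-- The key antisymmetry lemma: if `a ∈ C p b` and `b ∈ C p a` then `a = b`. -/
theorem star (hC : IsConvexitySpace C) (p a b : X) (hab : a ∈ C p b) (hba : b ∈ C p a) :
    a = b := by
  by_contra hne
  have hap : a ≠ p := by
    rintro rfl
    rw [hC.single a] at hba
    exact hne hba.symm
  have hKeq : C p b = C p a :=
    hC.minimal p a (C p b) (hC.convex p a p (hC.mem_left p a) b hba) (hC.mem_left p b)
      hab (hC.preconnected p b)
  set S : Set X := {w | w ∈ C p a ∧ a ∉ C p w} with hSdef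
  have hpS : p ∈ S := ⟨hC.mem_left p a, by rw [hC.single p]; exact fun h => hap h⟩
  have hSconn : IsPreconnected S := by
    have hrep : S = ⋃₀ ((fun w => C p w) '' S) := by
      ext w'
      constructor
      · intro hw'
        exact ⟨C p w', ⟨w', hw', rfl⟩, hC.mem_right p w'⟩
      · rintro ⟨_, ⟨w, hw, rfl⟩, hw'⟩
        refine ⟨hC.convex p a p (hC.mem_left p a) w hw.1 hw', fun ha => hw.2 ?_⟩
        exact hC.convex p w p (hC.mem_left p w) w' hw' ha
    rw [hrep]
    exact isPreconnected_sUnion p _ (by rintro _ ⟨w, hw, rfl⟩; exact hC.mem_left p w)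
      (by rintro _ ⟨w, hw, rfl⟩; exact hC.preconnected p w)
  have hc : ∃ c ∈ C p a, a ∈ C p c ∧ c ∈ closure S := by
    by_contra h'
    push_neg at h'
    obtain ⟨w, hwK, hwu, hwv⟩ := hC.preconnected p a {w | a ∉ C p w} (closure S)ᶜ
      (hC.isOpen_notMem p a) isClosed_closure.isOpen_compl
      (fun w hw => by
        by_cases ha : a ∈ C p w
        · exact Or.inr (h' w hw ha)
        · exact Or.inl ha)
      ⟨p, hC.mem_left p a, show a ∉ C p p by rw [hC.single p]; exact fun h => hap h⟩
      ⟨a, hC.mem_right p a, h' a (hC.mem_right p a) (hC.mem_right p a)⟩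
    exact hwv (subset_closure ⟨hwK, hwu⟩)
  obtain ⟨c, hcK, hac, hcc⟩ := hc
  have hCpc : C p c = C p a :=
    hC.minimal p a (C p c) (hC.convex p a p (hC.mem_left p a) c hcK) (hC.mem_left p c) hac
      (hC.preconnected p c)
  have hT : insert c S = C p c := by
    refine hC.minimal p c (insert c S) ?_ (Or.inr hpS) (Or.inl rfl) ?_
    · rw [hCpc]
      rintro w (rfl | hw)
      · exact hcK
      · exact hw.1
    · exact hSconn.subset_closure (subset_insert c S)
        (insert_subset hcc subset_closure)
  have haT : a ∈ insert c S := by rw [hT, hCpc]; exact hC.mem_right p a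
  have hbT : b ∈ insert c S := by rw [hT, hCpc]; exact hba
  have hac' : a = c := by
    rcases haT with h | h
    · exact h
    · exact absurd (hC.mem_right p a) h.2
  have hbc' : b = c := by
    rcases hbT with h | h
    · exact h
    · exact absurd hab h.2
  exact hne (hac'.trans hbc'.symm)

theorem total (hC : IsConvexitySpace C) {x y z t : X} (hz : z ∈ C x y) (ht : t ∈ C x y) :
    z ∈ C x t ∨ t ∈ C x z := by
  have h1 : z ∈ C x t ∪ C t y := (hC.split ht).symm ▸ hz
  rcases h1 with h | h
  · exact Or.inl h
  · have h2 : t ∈ C x z ∪ C z y := (hC.split hz).symm ▸ ht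
    rcases h2 with h' | h'
    · exact Or.inr h'
    · have hzt : z = t := hC.swap.star y z t h h'
      rw [hzt]
      exact Or.inl (hC.mem_right x t)

theorem mirror (hC : IsConvexitySpace C) {x y z t : X} (hz : z ∈ C x y) (ht : t ∈ C x y) :
    z ∈ C x t ↔ t ∈ C z y := by
  constructor
  · intro h
    have h2 : t ∈ C x z ∪ C z y := (hC.split hz).symm ▸ ht
    rcases h2 with h' | h'
    · have htz : t = z := hC.star x t z h' h
      rw [htz]
      exact hC.mem_left z y
    · exact h'
  · intro h
    have h1 : z ∈ C x t ∪ C t y := (hC.split ht).symm ▸ hz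
    rcases h1 with h' | h'
    · exact h'
    · have hzt : z = t := hC.swap.star y z t h' h
      rw [hzt]
      exact hC.mem_right x t

theorem between (hC : IsConvexitySpace C) {x w1 z w2 : X} (h1 : w1 ∈ C x z)
    (h2 : z ∈ C x w2) : z ∈ C w1 w2 := by
  have hw1 : w1 ∈ C x w2 := hC.convex x w2 x (hC.mem_left x w2) z h2 h1
  have h3 : z ∈ C x w1 ∪ C w1 w2 := (hC.split hw1).symm ▸ h2
  rcases h3 with h' | h'
  · have : z = w1 := hC.star x z w1 h' h1
    rw [this]
    exact hC.mem_left w1 w2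
  · exact h'

end IsConvexitySpace

open Set TopologicalSpace

/-- part of Proposition 2: Let `X` be a convexity space and `x, y ∈ X`.
The subspace topology that `C(x,y)` inherits from `X` coincides with the order topology
induced by the linear order on `C(x,y)` given by `z ≤ t` iff `z ∈ C(x,t)` (i.e. the topology
generated by the open rays `{z | a < z}` and `{z | z < a}`, where `a < z` means
`a ∈ C(x,z)` and `z ≠ a`, and `z < a` means `z ∈ C(x,a)` and `z ≠ a`). -/
theorem stmt_3 {X : Type*} [TopologicalSpace X] [T2Space X] {C : X → X → Set X}
    (hC : IsConvexitySpace C) (x y : X) :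
    (inferInstance : TopologicalSpace (C x y)) =
      TopologicalSpace.generateFrom
        {s : Set (C x y) |
          (∃ a : C x y, s = {z : C x y | (a : X) ∈ C x (z : X) ∧ z ≠ a}) ∨
          (∃ a : C x y, s = {z : C x y | (z : X) ∈ C x (a : X) ∧ z ≠ a})} := by
  refine le_antisymm (le_generateFrom ?_) ?_
  · rintro s (⟨a, rfl⟩ | ⟨a, rfl⟩)
    · -- the ray `{z | a < z}` equals the trace of the open set `{w | a ∉ C w y}`
      have hset : {z : C x y | (a : X) ∈ C x (z : X) ∧ z ≠ a} =
          Subtype.val ⁻¹' {w : X | (a : X) ∉ C w y} := by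
        ext z
        simp only [mem_setOf_eq, mem_preimage]
        constructor
        · rintro ⟨h1, h2⟩ ha
          have hz : (z : X) ∈ C x (a : X) := (hC.mirror z.2 a.2).mpr ha
          exact h2 (Subtype.ext (hC.star x (z : X) (a : X) hz h1))
        · intro ha
          refine ⟨?_, ?_⟩
          · rcases hC.total z.2 a.2 with h | h
            · exact absurd ((hC.mirror z.2 a.2).mp h) ha
            · exact h
          · rintro rfl
            exact ha (hC.mem_left _ y)
      rw [hset]
      exact (hC.swap.isOpen_notMem y (a : X)).preimage continuous_subtype_val
    · -- the ray `{z | z < a}` equals the trace of the open set `{w | a ∉ C x w}`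
      have hset : {z : C x y | (z : X) ∈ C x (a : X) ∧ z ≠ a} =
          Subtype.val ⁻¹' {w : X | (a : X) ∉ C x w} := by
        ext z
        simp only [mem_setOf_eq, mem_preimage]
        constructor
        · rintro ⟨h1, h2⟩ ha
          exact h2 (Subtype.ext (hC.star x (z : X) (a : X) h1 ha))
        · intro ha
          refine ⟨?_, ?_⟩
          · rcases hC.total z.2 a.2 with h | h
            · exact h
            · exact absurd h ha
          · rintro rfl
            exact ha (hC.mem_right x _)
      rw [hset]
      exact (hC.isOpen_notMem x (a : X)).preimage continuous_subtype_val
  · rw [TopologicalSpace.le_def]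
    intro U hU
    obtain ⟨U₀, hU₀, rfl⟩ := isOpen_induced_iff.mp hU
    show TopologicalSpace.GenerateOpen
      {s : Set (C x y) |
        (∃ a : C x y, s = {z : C x y | (a : X) ∈ C x (z : X) ∧ z ≠ a}) ∨
        (∃ a : C x y, s = {z : C x y | (z : X) ∈ C x (a : X) ∧ z ≠ a})}
      (Subtype.val ⁻¹' U₀)
    have key : ∀ z ∈ (Subtype.val ⁻¹' U₀ : Set (C x y)), ∃ O : Set (C x y),
        O ⊆ Subtype.val ⁻¹' U₀ ∧ TopologicalSpace.GenerateOpen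
          {s : Set (C x y) |
            (∃ a : C x y, s = {z : C x y | (a : X) ∈ C x (z : X) ∧ z ≠ a}) ∨
            (∃ a : C x y, s = {z : C x y | (z : X) ∈ C x (a : X) ∧ z ≠ a})} O ∧ z ∈ O := by
      intro z hz
      have hzU : (z : X) ∈ U₀ := hz
      obtain ⟨V, hVopen, hzV, hVU, hVconv⟩ := hC.basis (z : X) U₀ hU₀ hzU
      -- a point of `V ∩ C(x,y)` strictly below `z`, unless `z = x`
      have hbelow : (z : X) = x ∨
          ∃ w1 : C x y, (w1 : X) ∈ V ∧ (w1 : X) ∈ C x (z : X) ∧ w1 ≠ z := by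
        by_cases hzx : (z : X) = x
        · exact Or.inl hzx
        · obtain ⟨w, hwC, hwV, hwz⟩ := hC.preconnected x (z : X) V {(z : X)}ᶜ hVopen
            isOpen_compl_singleton
            (fun w hw => by
              by_cases h : w = (z : X)
              · exact Or.inl (h ▸ hzV)
              · exact Or.inr h)
            ⟨(z : X), hC.mem_right x (z : X), hzV⟩
            ⟨x, hC.mem_left x (z : X), fun h => hzx h.symm⟩
          have hwK : w ∈ C x y := hC.convex x y x (hC.mem_left x y) (z : X) z.2 hwC
          exact Or.inr ⟨⟨w, hwK⟩, hwV, hwC, fun h => hwz (congrArg Subtype.val h)⟩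
      -- a point of `V ∩ C(x,y)` strictly above `z`, unless `z = y`
      have habove : (z : X) = y ∨
          ∃ w2 : C x y, (w2 : X) ∈ V ∧ (z : X) ∈ C x (w2 : X) ∧ w2 ≠ z := by
        by_cases hzy : (z : X) = y
        · exact Or.inl hzy
        · obtain ⟨w, hwC, hwV, hwz⟩ := hC.preconnected (z : X) y V {(z : X)}ᶜ hVopen
            isOpen_compl_singleton
            (fun w hw => by
              by_cases h : w = (z : X)
              · exact Or.inl (h ▸ hzV)
              · exact Or.inr h)
            ⟨(z : X), hC.mem_left (z : X) y, hzV⟩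
            ⟨y, hC.mem_right (z : X) y, fun h => hzy h.symm⟩
          have hwK : w ∈ C x y := hC.convex x y (z : X) z.2 y (hC.mem_right x y) hwC
          have hzw : (z : X) ∈ C x w := (hC.mirror z.2 hwK).mpr hwC
          exact Or.inr ⟨⟨w, hwK⟩, hwV, hzw, fun h => hwz (congrArg Subtype.val h)⟩
      rcases hbelow with hzx | ⟨w1, hw1V, hw1z, hw1ne⟩
      · rcases habove with hzy | ⟨w2, hw2V, hzw2, hw2ne⟩
        · -- `C x y` is a single point
          refine ⟨univ, ?_, TopologicalSpace.GenerateOpen.univ, mem_univ z⟩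
          rintro ⟨w, hw⟩ -
          show w ∈ U₀
          have hxy : y = x := hzy.symm.trans hzx
          rw [hxy, hC.single x, mem_singleton_iff] at hw
          rw [hw, ← hzx]
          exact hzU
        · -- `z` is the minimum: use the ray `{t | t < w2}`
          refine ⟨{t : C x y | (t : X) ∈ C x (w2 : X) ∧ t ≠ w2}, ?_,
            TopologicalSpace.GenerateOpen.basic _ (Or.inr ⟨w2, rfl⟩), hzw2, hw2ne.symm⟩
          rintro t ⟨ht1, -⟩
          have hzt : (z : X) ∈ C x (t : X) := by rw [hzx]; exact hC.mem_left x (t : X)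
          have : (t : X) ∈ C (z : X) (w2 : X) := hC.between hzt ht1
          show (t : X) ∈ U₀
          exact hVU (hVconv (z : X) hzV (w2 : X) hw2V this)
      · rcases habove with hzy | ⟨w2, hw2V, hzw2, hw2ne⟩
        · -- `z` is the maximum: use the ray `{t | w1 < t}`
          refine ⟨{t : C x y | (w1 : X) ∈ C x (t : X) ∧ t ≠ w1}, ?_,
            TopologicalSpace.GenerateOpen.basic _ (Or.inl ⟨w1, rfl⟩), hw1z, hw1ne.symm⟩
          rintro t ⟨ht1, -⟩
          have htz : (t : X) ∈ C x (z : X) := by rw [hzy]; exact t.2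
          have : (t : X) ∈ C (w1 : X) (z : X) := hC.between ht1 htz
          show (t : X) ∈ U₀
          exact hVU (hVconv (w1 : X) hw1V (z : X) hzV this)
        · -- interior point: use the interval `{t | w1 < t} ∩ {t | t < w2}`
          refine ⟨{t : C x y | (w1 : X) ∈ C x (t : X) ∧ t ≠ w1} ∩
              {t : C x y | (t : X) ∈ C x (w2 : X) ∧ t ≠ w2}, ?_,
            TopologicalSpace.GenerateOpen.inter _ _
              (TopologicalSpace.GenerateOpen.basic _ (Or.inl ⟨w1, rfl⟩))
              (TopologicalSpace.GenerateOpen.basic _ (Or.inr ⟨w2, rfl⟩)),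
            ⟨⟨hw1z, hw1ne.symm⟩, ⟨hzw2, hw2ne.symm⟩⟩⟩
          rintro t ⟨⟨ht1, -⟩, ⟨ht2, -⟩⟩
          have : (t : X) ∈ C (w1 : X) (w2 : X) := hC.between ht1 ht2
          show (t : X) ∈ U₀
          exact hVU (hVconv (w1 : X) hw1V (w2 : X) hw2V this)
    have hrep : (Subtype.val ⁻¹' U₀ : Set (C x y)) = ⋃₀ {O : Set (C x y) |
        TopologicalSpace.GenerateOpen
          {s : Set (C x y) |
            (∃ a : C x y, s = {z : C x y | (a : X) ∈ C x (z : X) ∧ z ≠ a}) ∨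
            (∃ a : C x y, s = {z : C x y | (z : X) ∈ C x (a : X) ∧ z ≠ a})} O ∧
        O ⊆ Subtype.val ⁻¹' U₀} := by
      ext w
      constructor
      · intro hw
        obtain ⟨O, h1, h2, h3⟩ := key w hw
        exact ⟨O, ⟨h2, h1⟩, h3⟩
      · rintro ⟨O, ⟨-, h1⟩, h3⟩
        exact h1 h3
    rw [hrep]
    exact TopologicalSpace.GenerateOpen.sUnion _ (fun O hO => hO.1)
end

section
/- Let X be a convexity space. The closure of any convex subset of X is convex. -/
set_option linter.unusedVariables false
set_option linter.unusedSectionVars false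

namespace CvxAux

variable {X : Type*} [TopologicalSpace X] [T2Space X] {C : X → X → Set X}

lemma self_eq (hC : IsConvexitySpace C) (x : X) : C x x = {x} :=
  (hC.minimal x x {x} (Set.singleton_subset_iff.2 (hC.mem_left x x)) rfl rfl
    isPreconnected_singleton).symm

lemma sub (hC : IsConvexitySpace C) {x y a b : X} (ha : a ∈ C x y) (hb : b ∈ C x y) :
    C a b ⊆ C x y := hC.convex x y a ha b hb

lemma symm (hC : IsConvexitySpace C) (x y : X) : C x y = C y x :=
  subset_antisymm (hC.convex y x x (hC.mem_right y x) y (hC.mem_left y x))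
    (hC.convex x y y (hC.mem_right x y) x (hC.mem_left x y))

/-- Gluing lemma: if `S` is preconnected, `r ∈ S`, and `U, V` separate `S \ {r}`,
then `(S ∩ U) ∪ {r}` is preconnected. -/
lemma glue {S U V : Set X} {r : X} (hS : IsPreconnected S) (hr : r ∈ S)
    (hU : IsOpen U) (hV : IsOpen V) (hrU : r ∉ U) (hrV : r ∉ V)
    (hcov : S \ {r} ⊆ U ∪ V) (hdisj : S ∩ (U ∩ V) = ∅) :
    IsPreconnected ((S ∩ U) ∪ {r}) := by
  have key : ∀ O₁ O₂ : Set X, IsOpen O₁ → IsOpen O₂ →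
      (S ∩ U) ∪ {r} ⊆ O₁ ∪ O₂ → (((S ∩ U) ∪ {r}) ∩ O₂).Nonempty → r ∈ O₁ →
      (((S ∩ U) ∪ {r}) ∩ (O₁ ∩ O₂)).Nonempty := by
    intro O₁ O₂ hO₁ hO₂ hTcov hne₂ hrO₁
    by_contra hcon
    rw [Set.not_nonempty_iff_eq_empty] at hcon
    have hrO₂ : r ∉ O₂ := by
      intro h
      have : r ∈ ((S ∩ U) ∪ {r}) ∩ (O₁ ∩ O₂) := ⟨Or.inr rfl, hrO₁, h⟩
      rw [hcon] at this; exact this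
    obtain ⟨t, htT, htO₂⟩ := hne₂
    have htSU : t ∈ S ∩ U := by
      rcases htT with h | h
      · exact h
      · exact absurd (h ▸ htO₂) hrO₂
    have := hS (O₁ ∪ V) (O₂ ∩ U) (hO₁.union hV) (hO₂.inter hU)
      (by
        intro x hx
        by_cases hxr : x = r
        · exact Or.inl (Or.inl (hxr ▸ hrO₁))
        · rcases hcov ⟨hx, hxr⟩ with hxU | hxV
          · rcases hTcov (Or.inl ⟨hx, hxU⟩) with h | h
            · exact Or.inl (Or.inl h)
            · exact Or.inr ⟨h, hxU⟩
          · exact Or.inl (Or.inr hxV))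
      ⟨r, hr, Or.inl hrO₁⟩
      ⟨t, htSU.1, htO₂, htSU.2⟩
    obtain ⟨y, hyS, hy1, hyO₂, hyU⟩ := this
    rcases hy1 with hyO₁ | hyV
    · have : y ∈ ((S ∩ U) ∪ {r}) ∩ (O₁ ∩ O₂) := ⟨Or.inl ⟨hyS, hyU⟩, hyO₁, hyO₂⟩
      rw [hcon] at this; exact this
    · have : y ∈ S ∩ (U ∩ V) := ⟨hyS, hyU, hyV⟩
      rw [hdisj] at this; exact this
  intro O₁ O₂ hO₁ hO₂ hTcov hne₁ hne₂
  have hrT : r ∈ (S ∩ U) ∪ {r} := Or.inr rfl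
  rcases hTcov hrT with hr1 | hr2
  · exact key O₁ O₂ hO₁ hO₂ hTcov hne₂ hr1
  · have := key O₂ O₁ hO₂ hO₁ (by rwa [Set.union_comm O₁ O₂] at hTcov) hne₁ hr2
    rwa [Set.inter_comm O₂ O₁] at this

end CvxAux


namespace CvxAux

variable {X : Type*} [TopologicalSpace X] [T2Space X] {C : X → X → Set X}

lemma not_preconnected {s : Set X} (h : ¬ IsPreconnected s) :
    ∃ U V : Set X, IsOpen U ∧ IsOpen V ∧ s ⊆ U ∪ V ∧ (s ∩ U).Nonempty ∧
      (s ∩ V).Nonempty ∧ s ∩ (U ∩ V) = ∅ := by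
  unfold IsPreconnected at h
  push_neg at h
  obtain ⟨U, V, hU, hV, hcov, hne1, hne2, hdis⟩ := h
  exact ⟨U, V, hU, hV, hcov, hne1, hne2, hdis⟩

/-- Removing an endpoint keeps a minimal connected set preconnected. -/
lemma endpoint (hC : IsConvexitySpace C) {x s : X} (hxs : x ≠ s) :
    IsPreconnected (C x s \ {s}) := by
  by_contra h
  obtain ⟨U₀, V₀, hU₀, hV₀, hcov₀, hne1₀, hne2₀, hdis₀⟩ := not_preconnected h
  -- shrink to exclude s
  set U := U₀ ∩ {s}ᶜ with hUdef
  set V := V₀ ∩ {s}ᶜ with hVdef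
  have hU : IsOpen U := hU₀.inter isClosed_singleton.isOpen_compl
  have hV : IsOpen V := hV₀.inter isClosed_singleton.isOpen_compl
  have hsU : s ∉ U := fun h' => h'.2 rfl
  have hsV : s ∉ V := fun h' => h'.2 rfl
  have hcov : C x s \ {s} ⊆ U ∪ V := by
    intro y hy
    rcases hcov₀ hy with h' | h'
    · exact Or.inl ⟨h', hy.2⟩
    · exact Or.inr ⟨h', hy.2⟩
  have hdis : C x s ∩ (U ∩ V) = ∅ := by
    apply Set.eq_empty_iff_forall_notMem.2
    intro y hy
    have : y ∈ (C x s \ {s}) ∩ (U₀ ∩ V₀) := ⟨⟨hy.1, hy.2.1.2⟩, hy.2.1.1, hy.2.2.1⟩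
    rw [hdis₀] at this; exact this
  have key : ∀ W₁ W₂ : Set X, IsOpen W₁ → IsOpen W₂ → s ∉ W₁ → s ∉ W₂ →
      (C x s \ {s} ⊆ W₁ ∪ W₂) → (C x s ∩ (W₁ ∩ W₂) = ∅) → x ∈ W₁ →
      ¬ ((C x s \ {s}) ∩ W₂).Nonempty := by
    intro W₁ W₂ hW₁ hW₂ hsW₁ hsW₂ hcov' hdis' hxW₁
    have hT : IsPreconnected ((C x s ∩ W₁) ∪ {s}) :=
      glue (hC.preconnected x s) (hC.mem_right x s) hW₁ hW₂ hsW₁ hsW₂ hcov' hdis'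
    have hTeq : (C x s ∩ W₁) ∪ {s} = C x s := by
      refine hC.minimal x s _ ?_ ?_ ?_ hT
      · exact Set.union_subset Set.inter_subset_left
          (Set.singleton_subset_iff.2 (hC.mem_right x s))
      · exact Or.inl ⟨hC.mem_left x s, hxW₁⟩
      · exact Or.inr rfl
    rintro ⟨y, ⟨hyC, hys⟩, hyW₂⟩
    have : y ∈ (C x s ∩ W₁) ∪ {s} := by rw [hTeq]; exact hyC
    rcases this with h' | h'
    · have : y ∈ C x s ∩ (W₁ ∩ W₂) := ⟨hyC, h'.2, hyW₂⟩
      rw [hdis'] at this; exact this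
    · exact hys h'
  have hne1 : ((C x s \ {s}) ∩ U).Nonempty := by
    obtain ⟨y, hy, hyU⟩ := hne1₀; exact ⟨y, hy, hyU, hy.2⟩
  have hne2 : ((C x s \ {s}) ∩ V).Nonempty := by
    obtain ⟨y, hy, hyV⟩ := hne2₀; exact ⟨y, hy, hyV, hy.2⟩
  have hx : x ∈ C x s \ {s} := ⟨hC.mem_left x s, hxs⟩
  rcases hcov hx with hxU | hxV
  · exact key U V hU hV hsU hsV hcov hdis hxU hne2
  · refine key V U hV hU hsV hsU ?_ ?_ hxV hne1
    · rwa [Set.union_comm]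
    · rwa [Set.inter_comm V U]

lemma antisym (hC : IsConvexitySpace C) {x s t : X} (hst : s ∈ C x t) (hts : t ∈ C x s) :
    s = t := by
  by_contra hne
  by_cases hsx : s = x
  · subst hsx
    rw [self_eq hC s] at hts
    exact hne hts.symm
  have hD : C x s = C x t :=
    subset_antisymm (sub hC (hC.mem_left x t) hst) (sub hC (hC.mem_left x s) hts)
  have hpre : IsPreconnected (C x s \ {s}) := endpoint hC (fun h => hsx h.symm)
  have hmin : C x s \ {s} = C x t := by
    refine hC.minimal x t _ ?_ ?_ ?_ hpre
    · exact fun y hy => hD ▸ hy.1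
    · exact ⟨hC.mem_left x s, fun h => hsx h.symm⟩
    · exact ⟨hts, fun h => hne h.symm⟩
  rw [← hmin] at hst
  exact hst.2 rfl

lemma decomp (hC : IsConvexitySpace C) {x y m : X} (hm : m ∈ C x y) :
    C x y = C x m ∪ C m y := by
  refine (hC.minimal x y _ ?_ ?_ ?_ ?_).symm
  · exact Set.union_subset (sub hC (hC.mem_left x y) hm) (sub hC hm (hC.mem_right x y))
  · exact Or.inl (hC.mem_left x m)
  · exact Or.inr (hC.mem_right m y)
  · exact IsPreconnected.union m (hC.mem_right x m) (hC.mem_left m y)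
      (hC.preconnected x m) (hC.preconnected m y)

lemma between_inter (hC : IsConvexitySpace C) {x y m : X} (hm : m ∈ C x y) :
    C x m ∩ C m y ⊆ {m} := by
  rintro w ⟨hw1, hw2⟩
  have hxw : C x w ⊆ C x y :=
    (sub hC (hC.mem_left x m) hw1).trans (sub hC (hC.mem_left x y) hm)
  have hwy : C w y ⊆ C x y :=
    (sub hC hw2 (hC.mem_right m y)).trans (sub hC hm (hC.mem_right x y))
  have hD : C x w ∪ C w y = C x y := by
    refine hC.minimal x y _ (Set.union_subset hxw hwy) ?_ ?_ ?_
    · exact Or.inl (hC.mem_left x w)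
    · exact Or.inr (hC.mem_right w y)
    · exact IsPreconnected.union w (hC.mem_right x w) (hC.mem_left w y)
        (hC.preconnected x w) (hC.preconnected w y)
  have : m ∈ C x w ∪ C w y := hD.symm ▸ hm
  rcases this with h | h
  · exact (antisym hC h hw1).symm
  · have h' : m ∈ C y w := (symm hC w y) ▸ h
    have hw2' : w ∈ C y m := (symm hC m y) ▸ hw2
    exact (antisym hC h' hw2').symm

lemma total (hC : IsConvexitySpace C) {u v a b : X} (ha : a ∈ C u v) (hb : b ∈ C u v) :
    a ∈ C u b ∨ b ∈ C u a := by
  have h1 : a ∈ C u b ∪ C b v := (decomp hC hb) ▸ ha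
  rcases h1 with h | h
  · exact Or.inl h
  · have ha' : a ∈ C v u := (symm hC u v) ▸ ha
    have hb' : b ∈ C v u := (symm hC u v) ▸ hb
    have h2 : b ∈ C v a ∪ C a u := (decomp hC ha') ▸ hb'
    rcases h2 with h3 | h3
    · have h4 : a ∈ C v b := (symm hC b v) ▸ h
      have : a = b := antisym hC h4 h3
      subst this
      exact Or.inl (hC.mem_right u a)
    · exact Or.inr ((symm hC a u) ▸ h3)

end CvxAux

namespace CvxAux

variable {X : Type*} [TopologicalSpace X] [T2Space X] {C : X → X → Set X}

/-- Canonical separation of `C u v \ {z}` into the two "sides" `C u z \ {z}`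
and `C z v \ {z}`, realized by open sets. -/
lemma sep (hC : IsConvexitySpace C) {u v z : X} (hz : z ∈ C u v) (hzu : z ≠ u)
    (hzv : z ≠ v) :
    ∃ U V : Set X, IsOpen U ∧ IsOpen V ∧ z ∉ U ∧ z ∉ V ∧ C u v ∩ (U ∩ V) = ∅ ∧
      C u v ∩ U = C u z \ {z} ∧ C u v ∩ V = C z v \ {z} := by
  have hCuz : C u z ⊆ C u v := sub hC (hC.mem_left u v) hz
  have hCzv : C z v ⊆ C u v := sub hC hz (hC.mem_right u v)
  have hnp : ¬ IsPreconnected (C u v \ {z}) := by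
    intro hp
    have heq := hC.minimal u v _ Set.diff_subset ⟨hC.mem_left u v, fun h => hzu (Set.mem_singleton_iff.1 h).symm⟩
      ⟨hC.mem_right u v, fun h => hzv (Set.mem_singleton_iff.1 h).symm⟩ hp
    have hz' : z ∈ C u v \ {z} := by rw [heq]; exact hz
    exact hz'.2 rfl
  obtain ⟨U₀, V₀, hU₀, hV₀, hcov₀, hne1₀, hne2₀, hdis₀⟩ := not_preconnected hnp
  set U := U₀ ∩ {z}ᶜ with hUdef
  set V := V₀ ∩ {z}ᶜ with hVdef
  have hU : IsOpen U := hU₀.inter isClosed_singleton.isOpen_compl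
  have hV : IsOpen V := hV₀.inter isClosed_singleton.isOpen_compl
  have hzU : z ∉ U := fun h' => h'.2 rfl
  have hzV : z ∉ V := fun h' => h'.2 rfl
  have hcov : C u v \ {z} ⊆ U ∪ V := by
    intro y hy
    rcases hcov₀ hy with h' | h'
    · exact Or.inl ⟨h', hy.2⟩
    · exact Or.inr ⟨h', hy.2⟩
  have hdis : C u v ∩ (U ∩ V) = ∅ := by
    apply Set.eq_empty_iff_forall_notMem.2
    intro y hy
    have : y ∈ (C u v \ {z}) ∩ (U₀ ∩ V₀) := ⟨⟨hy.1, hy.2.1.2⟩, hy.2.1.1, hy.2.2.1⟩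
    rw [hdis₀] at this; exact this
  have hne1 : ((C u v \ {z}) ∩ U).Nonempty := by
    obtain ⟨y, hy, hyU⟩ := hne1₀; exact ⟨y, hy, hyU, hy.2⟩
  have hne2 : ((C u v \ {z}) ∩ V).Nonempty := by
    obtain ⟨y, hy, hyV⟩ := hne2₀; exact ⟨y, hy, hyV, hy.2⟩
  -- side lemmas
  have SCu : ∀ W₁ W₂ : Set X, IsOpen W₁ → IsOpen W₂ → z ∉ W₁ → z ∉ W₂ →
      (C u v \ {z} ⊆ W₁ ∪ W₂) → (C u v ∩ (W₁ ∩ W₂) = ∅) → u ∈ W₁ →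
      C u z \ {z} ⊆ W₁ := by
    intro W₁ W₂ hW₁ hW₂ hzW₁ hzW₂ hcov' hdis' huW₁
    have hcov'' : C u z \ {z} ⊆ W₁ ∪ W₂ := fun y hy => hcov' ⟨hCuz hy.1, hy.2⟩
    have hdis'' : C u z ∩ (W₁ ∩ W₂) = ∅ := by
      apply Set.eq_empty_iff_forall_notMem.2
      intro y hy
      have : y ∈ C u v ∩ (W₁ ∩ W₂) := ⟨hCuz hy.1, hy.2⟩
      rw [hdis'] at this; exact this
    have hT := glue (hC.preconnected u z) (hC.mem_right u z) hW₁ hW₂ hzW₁ hzW₂ hcov'' hdis''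
    have hTeq : (C u z ∩ W₁) ∪ {z} = C u z := by
      refine hC.minimal u z _ ?_ ?_ ?_ hT
      · exact Set.union_subset Set.inter_subset_left
          (Set.singleton_subset_iff.2 (hC.mem_right u z))
      · exact Or.inl ⟨hC.mem_left u z, huW₁⟩
      · exact Or.inr rfl
    intro y hy
    have : y ∈ (C u z ∩ W₁) ∪ {z} := by rw [hTeq]; exact hy.1
    rcases this with h | h
    · exact h.2
    · exact absurd h hy.2
  have SCv : ∀ W₁ W₂ : Set X, IsOpen W₁ → IsOpen W₂ → z ∉ W₁ → z ∉ W₂ →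
      (C u v \ {z} ⊆ W₁ ∪ W₂) → (C u v ∩ (W₁ ∩ W₂) = ∅) → v ∈ W₁ →
      C z v \ {z} ⊆ W₁ := by
    intro W₁ W₂ hW₁ hW₂ hzW₁ hzW₂ hcov' hdis' hvW₁
    have hcov'' : C z v \ {z} ⊆ W₁ ∪ W₂ := fun y hy => hcov' ⟨hCzv hy.1, hy.2⟩
    have hdis'' : C z v ∩ (W₁ ∩ W₂) = ∅ := by
      apply Set.eq_empty_iff_forall_notMem.2
      intro y hy
      have : y ∈ C u v ∩ (W₁ ∩ W₂) := ⟨hCzv hy.1, hy.2⟩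
      rw [hdis'] at this; exact this
    have hT := glue (hC.preconnected z v) (hC.mem_left z v) hW₁ hW₂ hzW₁ hzW₂ hcov'' hdis''
    have hTeq : (C z v ∩ W₁) ∪ {z} = C z v := by
      refine hC.minimal z v _ ?_ ?_ ?_ hT
      · exact Set.union_subset Set.inter_subset_left
          (Set.singleton_subset_iff.2 (hC.mem_left z v))
      · exact Or.inr rfl
      · exact Or.inl ⟨hC.mem_right z v, hvW₁⟩
    intro y hy
    have : y ∈ (C z v ∩ W₁) ∪ {z} := by rw [hTeq]; exact hy.1
    rcases this with h | h
    · exact h.2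
    · exact absurd h hy.2
  -- same-side contradiction
  have same : ∀ W₁ W₂ : Set X, IsOpen W₁ → IsOpen W₂ → z ∉ W₁ → z ∉ W₂ →
      (C u v \ {z} ⊆ W₁ ∪ W₂) → (C u v ∩ (W₁ ∩ W₂) = ∅) → u ∈ W₁ → v ∈ W₁ →
      ((C u v \ {z}) ∩ W₂).Nonempty → False := by
    intro W₁ W₂ hW₁ hW₂ hzW₁ hzW₂ hcov' hdis' huW₁ hvW₁ hne
    obtain ⟨y, hy, hyW₂⟩ := hne
    have hsplit : y ∈ C u z ∪ C z v := by rw [← decomp hC hz]; exact hy.1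
    have hyW₁ : y ∈ W₁ := by
      rcases hsplit with h | h
      · exact SCu W₁ W₂ hW₁ hW₂ hzW₁ hzW₂ hcov' hdis' huW₁ ⟨h, hy.2⟩
      · exact SCv W₁ W₂ hW₁ hW₂ hzW₁ hzW₂ hcov' hdis' hvW₁ ⟨h, hy.2⟩
    have : y ∈ C u v ∩ (W₁ ∩ W₂) := ⟨hy.1, hyW₁, hyW₂⟩
    rw [hdis'] at this; exact this
  -- the two equalities
  have eqs : ∀ W₁ W₂ : Set X, IsOpen W₁ → IsOpen W₂ → z ∉ W₁ → z ∉ W₂ →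
      (C u v \ {z} ⊆ W₁ ∪ W₂) → (C u v ∩ (W₁ ∩ W₂) = ∅) → u ∈ W₁ → v ∈ W₂ →
      (C u v ∩ W₁ = C u z \ {z}) ∧ (C u v ∩ W₂ = C z v \ {z}) := by
    intro W₁ W₂ hW₁ hW₂ hzW₁ hzW₂ hcov' hdis' huW₁ hvW₂
    have hcovc : C u v \ {z} ⊆ W₂ ∪ W₁ := by rwa [Set.union_comm W₂ W₁]
    have hdisc : C u v ∩ (W₂ ∩ W₁) = ∅ := by rwa [Set.inter_comm W₂ W₁]
    constructor
    · apply subset_antisymm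
      · rintro x ⟨hxuv, hxW₁⟩
        have hxz : x ≠ z := fun h => hzW₁ (h ▸ hxW₁)
        have hsplit : x ∈ C u z ∪ C z v := by rw [← decomp hC hz]; exact hxuv
        rcases hsplit with h | h
        · exact ⟨h, hxz⟩
        · exfalso
          have hxW₂ : x ∈ W₂ := SCv W₂ W₁ hW₂ hW₁ hzW₂ hzW₁ hcovc hdisc hvW₂ ⟨h, hxz⟩
          have : x ∈ C u v ∩ (W₁ ∩ W₂) := ⟨hxuv, hxW₁, hxW₂⟩
          rw [hdis'] at this; exact this
      · intro x hx
        exact ⟨hCuz hx.1, SCu W₁ W₂ hW₁ hW₂ hzW₁ hzW₂ hcov' hdis' huW₁ hx⟩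
    · apply subset_antisymm
      · rintro x ⟨hxuv, hxW₂⟩
        have hxz : x ≠ z := fun h => hzW₂ (h ▸ hxW₂)
        have hsplit : x ∈ C u z ∪ C z v := by rw [← decomp hC hz]; exact hxuv
        rcases hsplit with h | h
        · exfalso
          have hxW₁ : x ∈ W₁ := SCu W₁ W₂ hW₁ hW₂ hzW₁ hzW₂ hcov' hdis' huW₁ ⟨h, hxz⟩
          have : x ∈ C u v ∩ (W₁ ∩ W₂) := ⟨hxuv, hxW₁, hxW₂⟩
          rw [hdis'] at this; exact this
        · exact ⟨h, hxz⟩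
      · intro x hx
        exact ⟨hCzv hx.1, SCv W₂ W₁ hW₂ hW₁ hzW₂ hzW₁ hcovc hdisc hvW₂ hx⟩
  have hucov : u ∈ U ∪ V := hcov ⟨hC.mem_left u v, fun h => hzu (Set.mem_singleton_iff.1 h).symm⟩
  have hvcov : v ∈ U ∪ V := hcov ⟨hC.mem_right u v, fun h => hzv (Set.mem_singleton_iff.1 h).symm⟩
  have hcovc : C u v \ {z} ⊆ V ∪ U := by rwa [Set.union_comm V U]
  have hdisc : C u v ∩ (V ∩ U) = ∅ := by rwa [Set.inter_comm V U]
  rcases hucov with huU | huV <;> rcases hvcov with hvU | hvV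
  · exact (same U V hU hV hzU hzV hcov hdis huU hvU hne2).elim
  · obtain ⟨e1, e2⟩ := eqs U V hU hV hzU hzV hcov hdis huU hvV
    exact ⟨U, V, hU, hV, hzU, hzV, hdis, e1, e2⟩
  · obtain ⟨e1, e2⟩ := eqs V U hV hU hzV hzU hcovc hdisc huV hvU
    exact ⟨V, U, hV, hU, hzV, hzU, hdisc, e1, e2⟩
  · exact (same V U hV hU hzV hzU hcovc hdisc huV hvV hne1).elim

lemma closure_mem (hC : IsConvexitySpace C) {p s : X} (hps : p ≠ s) {M : Set X}
    (hM : IsOpen M) (hsM : s ∈ M) :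
    ∃ w, w ∈ M ∧ w ∈ C p s ∧ w ≠ s := by
  have := hC.preconnected p s M {s}ᶜ hM isClosed_singleton.isOpen_compl
    (by
      intro x hx
      by_cases h : x = s
      · exact Or.inl (h ▸ hsM)
      · exact Or.inr h)
    ⟨s, hC.mem_right p s, hsM⟩ ⟨p, hC.mem_left p s, hps⟩
  obtain ⟨w, hwC, hwM, hws⟩ := this
  exact ⟨w, hwM, hwC, hws⟩

end CvxAux

namespace CvxAux

variable {X : Type*} [TopologicalSpace X] [T2Space X] {C : X → X → Set X}

/-- The "last point of `closure A`" along the arc from `p` to `q`, where `p ∈ closure A`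
and `q ∉ closure A`. -/
lemma sup (hC : IsConvexitySpace C) (A : Set X) {p q : X} (hp : p ∈ closure A)
    (hq : q ∉ closure A) :
    ∃ σ, σ ∈ closure A ∧ σ ∈ C p q ∧ ∀ k, k ∈ closure A → k ∈ C p q → k ∈ C p σ := by
  classical
  set B : Set X := {b | b ∈ C p q ∧ ∀ k, k ∈ closure A → k ∈ C p q → k ∈ C p b} with hBdef
  have hqB : q ∈ B := ⟨hC.mem_right p q, fun k _ hk => hk⟩
  by_cases hpB : p ∈ B
  · exact ⟨p, hp, hC.mem_left p q, hpB.2⟩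
  have hleast : ∃ σ ∈ B, ∀ b ∈ B, σ ∈ C p b := by
    by_contra hno
    push_neg at hno
    have hopen : ∀ x, x ∈ C p q → ∃ W : Set X, IsOpen W ∧ x ∈ W ∧
        ∀ y, y ∈ C p q → y ∈ W → (y ∈ B ↔ x ∈ B) := by
      intro x hx
      by_cases hxB : x ∈ B
      · obtain ⟨b', hb'B, hxb'⟩ := hno x hxB
        have hb'C : b' ∈ C p q := hb'B.1
        have hb'x : b' ∈ C p x := by
          rcases total hC hx hb'C with h | h
          · exact absurd h hxb'
          · exact h
        have hb'nx : b' ≠ x := fun h => hxb' (by rw [h]; exact hC.mem_right p x)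
        have hb'np : b' ≠ p := fun h => hpB (h ▸ hb'B)
        have hb'nq : b' ≠ q := fun h => hxb' (by rw [h]; exact hx)
        obtain ⟨U, V, hU, hV, hzU, hzV, hdis, hUeq, hVeq⟩ := sep hC hb'C hb'np hb'nq
        refine ⟨V, hV, ?_, ?_⟩
        · have hxb'q : x ∈ C b' q := by
            have hsplit : x ∈ C p b' ∪ C b' q := by rw [← decomp hC hb'C]; exact hx
            rcases hsplit with h | h
            · exact absurd (antisym hC hb'x h) hb'nx
            · exact h
          have : x ∈ C p q ∩ V := by
            rw [hVeq]
            exact ⟨hxb'q, fun h => hb'nx (Set.mem_singleton_iff.1 h).symm⟩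
          exact this.2
        · intro y hyC hyV
          have hy' : y ∈ C b' q \ {b'} := by rw [← hVeq]; exact ⟨hyC, hyV⟩
          have hb'y : b' ∈ C p y := by
            rcases total hC hyC hb'C with h | h
            · exfalso
              exact hy'.2 (between_inter hC hb'C ⟨h, hy'.1⟩)
            · exact h
          have hyB : y ∈ B :=
            ⟨hyC, fun k hkA hkC => sub hC (hC.mem_left p y) hb'y (hb'B.2 k hkA hkC)⟩
          simp only [hyB, hxB]
      · have hxk : ∃ k, k ∈ closure A ∧ k ∈ C p q ∧ k ∉ C p x := by
          by_contra hall
          push_neg at hall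
          exact hxB ⟨hx, hall⟩
        obtain ⟨k, hkA, hkC, hkx⟩ := hxk
        have hknp : k ≠ p := fun h => hkx (by rw [h]; exact hC.mem_left p x)
        have hknq : k ≠ q := fun h => hq (h ▸ hkA)
        obtain ⟨U, V, hU, hV, hzU, hzV, hdis, hUeq, hVeq⟩ := sep hC hkC hknp hknq
        refine ⟨U, hU, ?_, ?_⟩
        · have hxk' : x ∈ C p k := by
            rcases total hC hx hkC with h | h
            · exact h
            · exact absurd h hkx
          have hxnk : x ≠ k := fun h => hkx (by rw [← h]; exact hC.mem_right p x)
          have : x ∈ C p q ∩ U := by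
            rw [hUeq]
            exact ⟨hxk', fun h => hxnk (Set.mem_singleton_iff.1 h)⟩
          exact this.2
        · intro y hyC hyU
          have hy' : y ∈ C p k \ {k} := by rw [← hUeq]; exact ⟨hyC, hyU⟩
          have hynB : y ∉ B := by
            intro hyB
            have hky : k ∈ C p y := hyB.2 k hkA hkC
            exact hy'.2 (Set.mem_singleton_iff.2 (antisym hC hy'.1 hky))
          simp only [hynB, hxB]
    choose W hWopen hWmem hWiff using hopen
    set OB := ⋃ (b : X) (h : b ∈ C p q ∧ b ∈ B), W b h.1 with hOB
    set OL := ⋃ (b : X) (h : b ∈ C p q ∧ b ∉ B), W b h.1 with hOL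
    have hOBopen : IsOpen OB := isOpen_iUnion fun b => isOpen_iUnion fun h => hWopen b h.1
    have hOLopen : IsOpen OL := isOpen_iUnion fun b => isOpen_iUnion fun h => hWopen b h.1
    have hres := hC.preconnected p q OB OL hOBopen hOLopen
      (by
        intro x hx
        by_cases hxB : x ∈ B
        · exact Or.inl (Set.mem_iUnion.2 ⟨x, Set.mem_iUnion.2 ⟨⟨hx, hxB⟩, hWmem x hx⟩⟩)
        · exact Or.inr (Set.mem_iUnion.2 ⟨x, Set.mem_iUnion.2 ⟨⟨hx, hxB⟩, hWmem x hx⟩⟩))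
      ⟨q, hC.mem_right p q,
        Set.mem_iUnion.2 ⟨q, Set.mem_iUnion.2 ⟨⟨hqB.1, hqB⟩, hWmem q hqB.1⟩⟩⟩
      ⟨p, hC.mem_left p q,
        Set.mem_iUnion.2 ⟨p, Set.mem_iUnion.2 ⟨⟨hC.mem_left p q, hpB⟩, hWmem p (hC.mem_left p q)⟩⟩⟩
    obtain ⟨y, hyC, hyOB, hyOL⟩ := hres
    obtain ⟨b, hb⟩ := Set.mem_iUnion.1 hyOB
    obtain ⟨hbm, hyW⟩ := Set.mem_iUnion.1 hb
    obtain ⟨l, hl⟩ := Set.mem_iUnion.1 hyOL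
    obtain ⟨hlm, hyW'⟩ := Set.mem_iUnion.1 hl
    have h1 : y ∈ B := (hWiff b hbm.1 y hyC hyW).2 hbm.2
    have h2 : y ∉ B := fun h => hlm.2 ((hWiff l hlm.1 y hyC hyW').1 h)
    exact h2 h1
  obtain ⟨σ, hσB, hσleast⟩ := hleast
  have hσA : σ ∈ closure A := by
    by_contra hσA
    obtain ⟨M, hM, hσM, hMsub, hMconv⟩ :=
      hC.basis σ (closure A)ᶜ isClosed_closure.isOpen_compl hσA
    have hpσ : p ≠ σ := fun h => hpB (h ▸ hσB)
    obtain ⟨w, hwM, hwC, hws⟩ := closure_mem hC hpσ hM hσM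
    have hwCpq : w ∈ C p q := sub hC (hC.mem_left p q) hσB.1 hwC
    have hwnB : w ∉ B := by
      intro hwB
      exact hws (antisym hC hwC (hσleast w hwB))
    have hwk : ∃ k, k ∈ closure A ∧ k ∈ C p q ∧ k ∉ C p w := by
      by_contra hall
      push_neg at hall
      exact hwnB ⟨hwCpq, hall⟩
    obtain ⟨k, hkA, hkC, hkw⟩ := hwk
    have hkσ : k ∈ C p σ := hσB.2 k hkA hkC
    have hsplit : k ∈ C p w ∪ C w σ := by rw [← decomp hC hwC]; exact hkσ
    rcases hsplit with h | h
    · exact hkw h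
    · have hkM : k ∈ M := hMconv w hwM σ hσM h
      exact (hMsub hkM) hkA
  exact ⟨σ, hσA, hσB.1, hσB.2⟩

end CvxAux

/-- Proposition 3: Let `X` be a convexity space. The closure of any
convex subset of `X` is convex. -/
theorem stmt_4 {X : Type*} [TopologicalSpace X] [T2Space X] {C : X → X → Set X}
    (hC : IsConvexitySpace C) (A : Set X) (hA : ConvexWRT C A) :
    ConvexWRT C (closure A) := by
  intro u hu v hv z hz
  by_contra hzA
  have hzu : z ≠ u := fun h => hzA (h ▸ hu)
  have hzv : z ≠ v := fun h => hzA (h ▸ hv)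
  obtain ⟨U, V, hU, hV, hzU, hzV, hdisj, hUeq, hVeq⟩ := CvxAux.sep hC hz hzu hzv
  obtain ⟨σ, hσA, hσC, hσsup⟩ := CvxAux.sup hC A hu hzA
  obtain ⟨τ, hτA, hτC, hτsup⟩ := CvxAux.sup hC A hv hzA
  have hσz : σ ≠ z := fun h => hzA (h ▸ hσA)
  have hτz : τ ≠ z := fun h => hzA (h ▸ hτA)
  have hσuv : σ ∈ C u v := CvxAux.sub hC (hC.mem_left u v) hz hσC
  have hτC' : τ ∈ C z v := (CvxAux.symm hC v z) ▸ hτC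
  have hτuv : τ ∈ C u v := CvxAux.sub hC hz (hC.mem_right u v) hτC'
  have hσU : σ ∈ U := by
    have : σ ∈ C u v ∩ U := by
      rw [hUeq]; exact ⟨hσC, fun h => hσz (Set.mem_singleton_iff.1 h)⟩
    exact this.2
  have hτV : τ ∈ V := by
    have : τ ∈ C u v ∩ V := by
      rw [hVeq]; exact ⟨hτC', fun h => hτz (Set.mem_singleton_iff.1 h)⟩
    exact this.2
  have hcovz : ∀ c, c ∈ C u v → c ≠ z → c ∈ U ∪ V := by
    intro c hc hcz
    have hsplit : c ∈ C u z ∪ C z v := by rw [← CvxAux.decomp hC hz]; exact hc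
    rcases hsplit with h | h
    · have : c ∈ C u v ∩ U := by
        rw [hUeq]; exact ⟨h, fun hh => hcz (Set.mem_singleton_iff.1 hh)⟩
      exact Or.inl this.2
    · have : c ∈ C u v ∩ V := by
        rw [hVeq]; exact ⟨h, fun hh => hcz (Set.mem_singleton_iff.1 hh)⟩
      exact Or.inr this.2
  have hzστ : z ∈ C σ τ := by
    by_contra h
    obtain ⟨y, hyστ, hyU, hyV⟩ := hC.preconnected σ τ U V hU hV
      (fun x hx => hcovz x (CvxAux.sub hC hσuv hτuv hx) (fun he => h (he ▸ hx)))
      ⟨σ, hC.mem_left σ τ, hσU⟩ ⟨τ, hC.mem_right σ τ, hτV⟩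
    have : y ∈ C u v ∩ (U ∩ V) := ⟨CvxAux.sub hC hσuv hτuv hyστ, hyU, hyV⟩
    rw [hdisj] at this; exact this
  have hστ : σ ≠ τ := by
    intro h
    rw [← h, CvxAux.self_eq hC σ] at hzστ
    exact hσz (Set.mem_singleton_iff.1 hzστ).symm
  have hKz : C u z ∩ C z v ⊆ {z} := CvxAux.between_inter hC hz
  have hσuτ : σ ∈ C u τ := by
    rcases CvxAux.total hC hσuv hτuv with h | h
    · exact h
    · exfalso
      have h1 : τ ∈ C u z := CvxAux.sub hC (hC.mem_left u z) hσC h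
      exact hτz (Set.mem_singleton_iff.1 (hKz ⟨h1, hτC'⟩))
  have hτvσ : τ ∈ C v σ := by
    have hσvu : σ ∈ C v u := (CvxAux.symm hC u v) ▸ hσuv
    have hτvu : τ ∈ C v u := (CvxAux.symm hC u v) ▸ hτuv
    rcases CvxAux.total hC hτvu hσvu with h | h
    · exact h
    · exfalso
      have h1 : σ ∈ C v z := CvxAux.sub hC (hC.mem_left v z) hτC h
      have h2 : σ ∈ C z v := (CvxAux.symm hC v z) ▸ h1
      exact hσz (Set.mem_singleton_iff.1 (hKz ⟨hσC, h2⟩))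
  obtain ⟨O, O', hO, hO', hσO, hτO', hOO'⟩ := t2_separation hστ
  have hWopen : IsOpen (O ∪ O' ∪ (closure A)ᶜ) :=
    (hO.union hO').union isClosed_closure.isOpen_compl
  have hCW : C σ τ ⊆ O ∪ O' ∪ (closure A)ᶜ := by
    intro c hc
    by_cases hcA : c ∈ closure A
    · have hcz : c ≠ z := fun h => hzA (h ▸ hcA)
      have hcuv : c ∈ C u v := CvxAux.sub hC hσuv hτuv hc
      rcases hcovz c hcuv hcz with hcU | hcV
      · have hcK : c ∈ C u z := by
          have h' : c ∈ C u v ∩ U := ⟨hcuv, hcU⟩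
          rw [hUeq] at h'; exact h'.1
        have h1 : c ∈ C u σ := hσsup c hcA hcK
        have h2 : c = σ :=
          Set.mem_singleton_iff.1 (CvxAux.between_inter hC hσuτ ⟨h1, hc⟩)
        exact Or.inl (Or.inl (h2 ▸ hσO))
      · have hcK : c ∈ C z v := by
          have h' : c ∈ C u v ∩ V := ⟨hcuv, hcV⟩
          rw [hVeq] at h'; exact h'.1
        have hcK' : c ∈ C v z := (CvxAux.symm hC z v) ▸ hcK
        have h1 : c ∈ C v τ := hτsup c hcA hcK'
        have hc' : c ∈ C τ σ := (CvxAux.symm hC σ τ) ▸ hc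
        have h2 : c = τ :=
          Set.mem_singleton_iff.1 (CvxAux.between_inter hC hτvσ ⟨h1, hc'⟩)
        exact Or.inl (Or.inr (h2 ▸ hτO'))
    · exact Or.inr hcA
  obtain ⟨V₁, V₂, hV₁, hV₂, hσV₁, hτV₂, hcont⟩ := hC.continuity σ τ _ hWopen hCW
  obtain ⟨a', ha'o, ha'A⟩ :=
    (mem_closure_iff.1 hσA) (V₁ ∩ O) (hV₁.inter hO) ⟨hσV₁, hσO⟩
  obtain ⟨b', hb'o, hb'A⟩ :=
    (mem_closure_iff.1 hτA) (V₂ ∩ O') (hV₂.inter hO') ⟨hτV₂, hτO'⟩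
  have hD : C a' b' ⊆ O ∪ O' := by
    intro x hx
    have hxA : x ∈ A := hA a' ha'A b' hb'A hx
    rcases hcont a' ha'o.1 b' hb'o.1 hx with h | h
    · exact h
    · exact absurd (subset_closure hxA) h
  obtain ⟨y, hyD, hyO, hyO'⟩ := hC.preconnected a' b' O O' hO hO' hD
    ⟨a', hC.mem_left a' b', ha'o.2⟩ ⟨b', hC.mem_right a' b', hb'o.2⟩
  exact (Set.disjoint_left.1 hOO') hyO hyO'
end

section
/- Every convexity space that is a q-space is star-finite: if X is a convexity space in which every point has a sequence (U_n) of neighborhoods such that every sequence (x_n) with x_n ∈ U_n admits a cluster point, then every closed star in X has a finite end set. -/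
/-- Proposition 4: Every convexity space that is a q-space is star-finite.
Here a q-space is a space in which every point `p` has a sequence `(U n)` of neighbourhoods
such that every sequence `(u n)` with `u n ∈ U n` has a cluster point.  A star with center
`x` and end set `E ⊆ X \ {x}` is the union `S = ⋃ z ∈ E, C x z`, where the segments
`C x z`, `z ∈ E`, pairwise intersect exactly in `{x}`, and where the subspace topology of
`S` is the finest topology making all inclusions `C x z ↪ S` continuous (i.e. every
`Z ⊆ S` whose trace on each `C x z` is closed in `C x z` is closed in `S`).  If such a
star is closed in `X`, then its end set `E` is finite. -/
theorem stmt_5 {X : Type*} [TopologicalSpace X] [T2Space X] {C : X → X → Set X}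
    (hC : IsConvexitySpace C)
    (hq : ∀ p : X, ∃ U : ℕ → Set X, (∀ n, U n ∈ nhds p) ∧
      ∀ u : ℕ → X, (∀ n, u n ∈ U n) → ∃ c : X, MapClusterPt c Filter.atTop u)
    (x : X) (E : Set X) (hxE : x ∉ E)
    (hdisj : ∀ z ∈ E, ∀ z' ∈ E, z ≠ z' → C x z ∩ C x z' = {x})
    (hfinest : ∀ Z : Set X, Z ⊆ (⋃ z ∈ E, C x z) →
      (∀ z ∈ E, ∃ F : Set X, IsClosed F ∧ Z ∩ C x z = F ∩ C x z) →
      ∃ F : Set X, IsClosed F ∧ Z = F ∩ (⋃ z ∈ E, C x z))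
    (hclosed : IsClosed (⋃ z ∈ E, C x z)) :
    E.Finite := by
  by_contra hinf
  replace hinf : E.Infinite := hinf
  obtain ⟨U, hU, hcl⟩ := hq x
  -- choose countably many distinct ends
  let f := hinf.natEmbedding
  set z : ℕ → X := fun n => (f n : X) with hz
  have hzE : ∀ n, z n ∈ E := fun n => (f n).2
  have hzinj : Function.Injective z := fun m n h => f.injective (Subtype.ext h)
  have hzx : ∀ n, z n ≠ x := fun n h => hxE (h ▸ hzE n)
  -- key: pick a point ≠ x of C x z' in any neighborhood of x
  have key : ∀ n : ℕ, ∃ u, u ∈ C x (z n) ∧ u ∈ U n ∧ u ≠ x := by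
    intro n
    obtain ⟨W, hWV, hWo, hxW⟩ := mem_nhds_iff.mp (hU n)
    have hpc := hC.preconnected x (z n)
    have hcover : C x (z n) ⊆ W ∪ {x}ᶜ := by
      intro y _
      by_cases h : y = x
      · exact Or.inl (h ▸ hxW)
      · exact Or.inr h
    obtain ⟨u, huC, huW, hux⟩ := hpc W {x}ᶜ hWo isOpen_compl_singleton hcover
      ⟨x, hC.mem_left x (z n), hxW⟩ ⟨z n, hC.mem_right x (z n), hzx n⟩
    exact ⟨u, huC, hWV huW, hux⟩
  choose u huC huU hux using key
  -- u n lies only on the segment of z n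
  have honly : ∀ n : ℕ, ∀ z' ∈ E, u n ∈ C x z' → z' = z n := by
    intro n z' hz' hu
    by_contra hne
    have := hdisj z' hz' (z n) (hzE n) hne
    have : u n ∈ ({x} : Set X) := this ▸ ⟨hu, huC n⟩
    exact hux n this
  have huinj : Function.Injective u := by
    intro m n h
    by_contra hmn
    have hzne : z m ≠ z n := fun hh => hmn (hzinj hh)
    have := hdisj (z m) (hzE m) (z n) (hzE n) hzne
    have : u m ∈ ({x} : Set X) := this ▸ ⟨huC m, h ▸ huC n⟩
    exact hux m this
  -- tails are closed
  have htail : ∀ k : ℕ, IsClosed (u '' {n | k ≤ n}) := by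
    intro k
    have hsub : u '' {n | k ≤ n} ⊆ ⋃ z' ∈ E, C x z' := by
      rintro _ ⟨n, _, rfl⟩
      exact Set.mem_biUnion (hzE n) (huC n)
    have htrace : ∀ z' ∈ E, ∃ F : Set X, IsClosed F ∧
        (u '' {n | k ≤ n}) ∩ C x z' = F ∩ C x z' := by
      intro z' hz'
      refine ⟨(u '' {n | k ≤ n}) ∩ C x z', ?_, ?_⟩
      · have hss : ((u '' {n | k ≤ n}) ∩ C x z').Subsingleton := by
          rintro a ⟨⟨m, _, rfl⟩, haC⟩ b ⟨⟨n, _, rfl⟩, hbC⟩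
          have h1 := honly m z' hz' haC
          have h2 := honly n z' hz' hbC
          rw [hzinj (h1.symm.trans h2)]
        exact hss.isClosed
      · ext y
        constructor
        · intro hy; exact ⟨hy, hy.2⟩
        · intro hy; exact hy.1
    obtain ⟨F, hF, hFeq⟩ := hfinest _ hsub htrace
    rw [hFeq]
    exact hF.inter hclosed
  -- cluster point
  obtain ⟨c, hc⟩ := hcl u huU
  have hmem : ∀ k : ℕ, c ∈ u '' {n | k ≤ n} := by
    intro k
    rw [← (htail k).closure_eq]
    rw [mem_closure_iff]
    intro o ho hco
    have := (mapClusterPt_iff_frequently.mp hc) o (ho.mem_nhds hco)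
    obtain ⟨n, hn, hno⟩ := (this.and_eventually (Filter.eventually_ge_atTop k)).exists
    exact ⟨u n, hn, ⟨n, hno, rfl⟩⟩
  obtain ⟨n0, _, h0⟩ := hmem 0
  obtain ⟨m, hm, h1⟩ := hmem (n0 + 1)
  have heq : m = n0 := huinj (h1.trans h0.symm)
  have hm' : n0 + 1 ≤ m := hm
  omega
end

section
/- Let X be a Hausdorff real topological vector space, and for x, y ∈ X let C(x,y) be the closed line segment {λx + (1−λ)y : 0 ≤ λ ≤ 1}. Then X together with this map C is a convexity space if and only if X is a locally convex topological vector space (i.e., the origin has a neighborhood basis of convex sets). -/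
section aux
variable {X : Type*} [AddCommGroup X] [Module ℝ X] [TopologicalSpace X] [T2Space X]
    [IsTopologicalAddGroup X] [ContinuousSMul ℝ X]

lemma seg_minimal (x y : X) (A : Set X) (hA : A ⊆ segment ℝ x y) (hx : x ∈ A) (hy : y ∈ A)
    (hpc : IsPreconnected A) : A = segment ℝ x y := by
  rcases eq_or_ne x y with rfl | hxy
  · rw [segment_same] at hA ⊢
    exact Set.eq_singleton_iff_unique_mem.2 ⟨hx, fun z hz => hA hz⟩
  · set g : ℝ → X := fun t => x + t • (y - x) with hg
    have hginj : Function.Injective g := by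
      intro a b hab
      have : (a - b) • (y - x) = 0 := by
        simp only [hg] at hab
        rw [sub_smul]
        have := add_left_cancel hab
        rw [this, sub_self]
      rcases smul_eq_zero.1 this with h | h
      · exact sub_eq_zero.1 h
      · exact absurd (sub_eq_zero.1 h) hxy.symm
    have hgc : Continuous g := by continuity
    set e : Set.Icc (0:ℝ) 1 → X := fun t => g t.val with he
    have hec : Continuous e := hgc.comp continuous_subtype_val
    have heinj : Function.Injective e := fun a b hab =>
      Subtype.ext (hginj hab)
    have hemb := hec.isClosedEmbedding heinj
    have hseg : segment ℝ x y = Set.range e := by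
      rw [segment_eq_image' ℝ x y]
      ext z; simp only [Set.mem_image, Set.mem_range, he]
      constructor
      · rintro ⟨t, ht, rfl⟩; exact ⟨⟨t, ht⟩, rfl⟩
      · rintro ⟨⟨t, ht⟩, rfl⟩; exact ⟨t, ht, rfl⟩
    set B : Set (Set.Icc (0:ℝ) 1) := e ⁻¹' A with hB
    have hBimg : e '' B = A := by
      rw [hB, Set.image_preimage_eq_iff]
      rw [← hseg]; exact hA
    have hBpc : IsPreconnected B := by
      rw [← hemb.isInducing.isPreconnected_image, hBimg]; exact hpc
    set B' : Set ℝ := Subtype.val '' B with hB'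
    have hB'pc : IsPreconnected B' := hBpc.image _ continuous_subtype_val.continuousOn
    have h0 : (0:ℝ) ∈ B' := by
      refine ⟨⟨0, by norm_num⟩, ?_, rfl⟩
      show e _ ∈ A
      simpa [he, hg] using hx
    have h1 : (1:ℝ) ∈ B' := by
      refine ⟨⟨1, by norm_num⟩, ?_, rfl⟩
      show e _ ∈ A
      simpa [he, hg] using hy
    have hsub : Set.Icc (0:ℝ) 1 ⊆ B' := hB'pc.Icc_subset h0 h1
    have hsub' : B' ⊆ Set.Icc (0:ℝ) 1 := by
      rintro t ⟨⟨s, hs⟩, _, rfl⟩; exact hs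
    have hBeq : B' = Set.Icc (0:ℝ) 1 := le_antisymm hsub' hsub
    have : A = g '' B' := by
      rw [← hBimg, hB']
      ext z; simp only [Set.mem_image, he]
      constructor
      · rintro ⟨t, ht, rfl⟩; exact ⟨t.val, ⟨t, ht, rfl⟩, rfl⟩
      · rintro ⟨t, ⟨s, hs, rfl⟩, rfl⟩; exact ⟨s, hs, rfl⟩
    rw [this, hBeq, ← segment_eq_image' ℝ x y]

lemma seg_continuity (x y : X) (W : Set X) (hW : IsOpen W) (hsub : segment ℝ x y ⊆ W) :
    ∃ V V' : Set X, IsOpen V ∧ IsOpen V' ∧ x ∈ V ∧ y ∈ V' ∧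
      ∀ x' ∈ V, ∀ y' ∈ V', segment ℝ x' y' ⊆ W := by
  set F : ℝ × (X × X) → X := fun p => (1 - p.1) • p.2.1 + p.1 • p.2.2 with hF
  have hFc : Continuous F := by
    apply Continuous.add
    · exact (continuous_const.sub continuous_fst).smul (continuous_fst.comp continuous_snd)
    · exact continuous_fst.smul (continuous_snd.comp continuous_snd)
  have hn : IsOpen (F ⁻¹' W) := hW.preimage hFc
  have hps : (Set.Icc (0:ℝ) 1) ×ˢ ({(x, y)} : Set (X × X)) ⊆ F ⁻¹' W := by
    rintro ⟨t, p⟩ ⟨ht, hp⟩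
    simp only [Set.mem_singleton_iff] at hp
    subst hp
    apply hsub
    rw [segment_eq_image ℝ x y]
    exact ⟨t, ht, rfl⟩
  obtain ⟨u, v, hu, hv, hIu, hxv, huv⟩ :=
    generalized_tube_lemma isCompact_Icc isCompact_singleton hn hps
  obtain ⟨V, V', hV, hV', hxV, hyV', hVV'⟩ :=
    isOpen_prod_iff.1 hv x y (hxv rfl)
  refine ⟨V, V', hV, hV', hxV, hyV', ?_⟩
  intro x' hx' y' hy' z hz
  rw [segment_eq_image ℝ x' y'] at hz
  obtain ⟨t, ht, rfl⟩ := hz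
  show F (t, (x', y')) ∈ W
  exact huv (Set.mk_mem_prod (hIu ht) (hVV' (Set.mk_mem_prod hx' hy')))

end aux

/-- Example 4, first part: Let `X` be a Hausdorff real topological vector
space, and for `x, y ∈ X` let `C(x,y)` be the closed line segment
`{λ • x + (1-λ) • y : 0 ≤ λ ≤ 1}` (Mathlib's `segment ℝ x y`).  Then `X` together with
this map `C` is a convexity space if and only if `X` is a locally convex topological vector
space, i.e. the origin has a neighbourhood basis of convex sets. -/
theorem stmt_6 {X : Type*} [AddCommGroup X] [Module ℝ X] [TopologicalSpace X] [T2Space X]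
    [IsTopologicalAddGroup X] [ContinuousSMul ℝ X] :
    IsConvexitySpace (fun x y : X => segment ℝ x y) ↔
      ∀ S ∈ nhds (0 : X), ∃ T ∈ nhds (0 : X), Convex ℝ T ∧ T ⊆ S := by
  constructor
  · intro h S hS
    obtain ⟨W, hWS, hW, h0W⟩ := mem_nhds_iff.1 hS
    obtain ⟨V, hVopen, h0V, hVW, hVconv⟩ := h.basis 0 W hW h0W
    exact ⟨V, hVopen.mem_nhds h0V,
      convex_iff_segment_subset.2 (fun a ha b hb => hVconv a ha b hb), hVW.trans hWS⟩
  · intro hlc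
    refine ⟨fun x y => left_mem_segment ℝ x y, fun x y => right_mem_segment ℝ x y,
      fun x y => (convex_segment x y).isPreconnected, ?_, seg_minimal, seg_continuity, ?_⟩
    · intro x y u hu v hv
      exact (convex_segment x y).segment_subset hu hv
    · intro x W hW hxW
      have hS : (fun z : X => z + x) ⁻¹' W ∈ nhds (0 : X) := by
        apply ContinuousAt.preimage_mem_nhds (by fun_prop)
        simpa using hW.mem_nhds hxW
      obtain ⟨T, hT, hTconv, hTS⟩ := hlc _ hS
      refine ⟨(fun z : X => z + x) '' interior T, ?_, ?_, ?_, ?_⟩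
      · exact (Homeomorph.addRight x).isOpenMap _ isOpen_interior
      · exact ⟨0, mem_interior_iff_mem_nhds.2 hT, zero_add x⟩
      · rintro _ ⟨z, hz, rfl⟩
        exact hTS (interior_subset hz)
      · have hconv : Convex ℝ ((fun z : X => z + x) '' interior T) := by
          have := hTconv.interior.translate x
          simpa [add_comm] using this
        intro u hu v hv
        exact convex_iff_segment_subset.1 hconv hu hv
end

section
/- Let f : X → Y be a continuous map between topological spaces that is locally open onto its image. Then the quotient map q^f : X → X^f is open; equivalently, for every open set U ⊆ X, the saturation {x ∈ X : ∃ y ∈ U with f(x) = f(y) and f(𝓝(x)) = f(𝓝(y))} is open in X. -/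
/-- A continuous map `f : X → Y` is *locally open onto its image* if every `x ∈ X` has an
open neighbourhood `U` such that the induced map `U → f(U)` is open, where `f(U)` carries
the subspace topology from `Y` (equivalently: the image of every open `W ⊆ U` is
relatively open in `f(U)`). -/
def IsLocallyOpenOntoImage {X Y : Type*} [TopologicalSpace X] [TopologicalSpace Y]
    (f : X → Y) : Prop :=
  ∀ x : X, ∃ U : Set X, IsOpen U ∧ x ∈ U ∧
    ∀ W : Set X, W ⊆ U → IsOpen W → ∃ O : Set Y, IsOpen O ∧ f '' W = O ∩ f '' U

/-- The equivalence relation on `X` identifying `x` and `x'` iff `f x = f x'` and the image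
filters `f(𝓝 x)` and `f(𝓝 x')` coincide. -/
def nhdsSetoid {X Y : Type*} [TopologicalSpace X] (f : X → Y) : Setoid X where
  r a b := f a = f b ∧ Filter.map f (nhds a) = Filter.map f (nhds b)
  iseqv := ⟨fun _ => ⟨rfl, rfl⟩, fun h => ⟨h.1.symm, h.2.symm⟩,
    fun h h' => ⟨h.1.trans h'.1, h.2.trans h'.2⟩⟩

/-- The space `X^f`: the quotient of `X` by the relation `x ~ x'` iff `f x = f x'` and
`f(𝓝 x) = f(𝓝 x')`, endowed with the quotient topology. -/
abbrev SpaceXf {X Y : Type*} [TopologicalSpace X] (f : X → Y) : Type _ :=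
  Quotient (nhdsSetoid f)

/-- The canonical quotient map `q^f : X → X^f`. -/
def qMap {X Y : Type*} [TopologicalSpace X] (f : X → Y) : X → SpaceXf f :=
  Quotient.mk (nhdsSetoid f)

/-- The induced map `f# : X^f → Y` with `f = f# ∘ q^f`. -/
def fSharp {X Y : Type*} [TopologicalSpace X] (f : X → Y) : SpaceXf f → Y :=
  Quotient.lift f fun _ _ h => h.1


open Filter Topology Set

section Aux
variable {X Y : Type*} [TopologicalSpace X] [TopologicalSpace Y] (f : X → Y)

lemma restrictProp {U U' : Set X}
    (hprop : ∀ W : Set X, W ⊆ U → IsOpen W → ∃ O : Set Y, IsOpen O ∧ f '' W = O ∩ f '' U)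
    (hU' : U' ⊆ U) :
    ∀ W : Set X, W ⊆ U' → IsOpen W → ∃ O : Set Y, IsOpen O ∧ f '' W = O ∩ f '' U' := by
  intro W hWU' hW
  obtain ⟨O, hO, hWO⟩ := hprop W (hWU'.trans hU') hW
  refine ⟨O, hO, subset_antisymm (subset_inter ?_ (image_mono (f := f) hWU')) ?_⟩
  · rw [hWO]; exact inter_subset_left
  · calc O ∩ f '' U' ⊆ O ∩ f '' U := inter_subset_inter_right O (image_mono (f := f) hU')
    _ = f '' W := hWO.symm

lemma mapNhdsEq (hf : Continuous f) {U : Set X} (hU : IsOpen U)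
    (hprop : ∀ W : Set X, W ⊆ U → IsOpen W → ∃ O : Set Y, IsOpen O ∧ f '' W = O ∩ f '' U)
    {x : X} (hx : x ∈ U) :
    Filter.map f (𝓝 x) = 𝓝 (f x) ⊓ 𝓟 (f '' U) := by
  apply le_antisymm
  · refine le_inf hf.continuousAt (le_principal_iff.2 ?_)
    exact mem_map.2 (mem_of_superset (hU.mem_nhds hx) (subset_preimage_image f U))
  · intro S hS
    rw [mem_map] at hS
    obtain ⟨W, hWsub, hWopen, hxW⟩ :=
      mem_nhds_iff.1 (inter_mem hS (hU.mem_nhds hx))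
    obtain ⟨O, hO, hWO⟩ := hprop W (hWsub.trans inter_subset_right) hWopen
    have hfxO : f x ∈ O := by
      have : f x ∈ f '' W := mem_image_of_mem f hxW
      rw [hWO] at this; exact this.1
    refine mem_of_superset (inter_mem_inf (hO.mem_nhds hfxO) (mem_principal_self _)) ?_
    rw [← hWO]
    rintro z ⟨w, hw, rfl⟩
    exact (hWsub hw).1

lemma traceEq {A B M : Set Y} (hM : IsOpen M) {z : Y} (hz : z ∈ M)
    (hAB : ∀ w ∈ M, w ∈ A ↔ w ∈ B) : 𝓝 z ⊓ 𝓟 A = 𝓝 z ⊓ 𝓟 B := by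
  have hMz : 𝓝 z ⊓ 𝓟 M = 𝓝 z := inf_eq_left.2 (le_principal_iff.2 (hM.mem_nhds hz))
  have hMA : M ∩ A = M ∩ B := by
    ext w
    simp only [mem_inter_iff]
    exact and_congr_right (hAB w)
  calc 𝓝 z ⊓ 𝓟 A = 𝓝 z ⊓ 𝓟 M ⊓ 𝓟 A := by rw [hMz]
    _ = 𝓝 z ⊓ 𝓟 (M ∩ A) := by rw [inf_assoc, inf_principal]
    _ = 𝓝 z ⊓ 𝓟 (M ∩ B) := by rw [hMA]
    _ = 𝓝 z ⊓ 𝓟 M ⊓ 𝓟 B := by rw [inf_assoc, inf_principal]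
    _ = 𝓝 z ⊓ 𝓟 B := by rw [hMz]
end Aux

lemma satOpen {X Y : Type*} [TopologicalSpace X] [TopologicalSpace Y]
    (f : X → Y) (hf : Continuous f) (h : IsLocallyOpenOntoImage f)
    (U : Set X) (hU : IsOpen U) :
    IsOpen {x : X | ∃ y ∈ U, f x = f y ∧ Filter.map f (𝓝 x) = Filter.map f (𝓝 y)} := by
  rw [isOpen_iff_mem_nhds]
  rintro x ⟨y, hyU, hfxy, hfil⟩
  obtain ⟨Ux, hUxo, hxUx, hpx⟩ := h x
  obtain ⟨Uy, hUyo, hyUy, hpy⟩ := h y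
  set Uy' := Uy ∩ U with hUy'def
  have hpy' := restrictProp f hpy (inter_subset_left : Uy' ⊆ Uy)
  have hUy'o : IsOpen Uy' := hUyo.inter hU
  have hyUy' : y ∈ Uy' := ⟨hyUy, hyU⟩
  have key : 𝓝 (f x) ⊓ 𝓟 (f '' Ux) = 𝓝 (f x) ⊓ 𝓟 (f '' Uy') := by
    rw [← mapNhdsEq f hf hUxo hpx hxUx, hfil, mapNhdsEq f hf hUy'o hpy' hyUy', hfxy]
  have hB : f '' Uy' ∈ 𝓝 (f x) ⊓ 𝓟 (f '' Ux) := by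
    rw [key]; exact le_principal_iff.1 inf_le_right
  have hA : f '' Ux ∈ 𝓝 (f x) ⊓ 𝓟 (f '' Uy') := by
    rw [← key]; exact le_principal_iff.1 inf_le_right
  rw [Filter.mem_inf_principal] at hA hB
  obtain ⟨M₁, hM₁sub, hM₁o, hxM₁⟩ := mem_nhds_iff.1 hB
  obtain ⟨M₂, hM₂sub, hM₂o, hxM₂⟩ := mem_nhds_iff.1 hA
  have hMo : IsOpen (M₁ ∩ M₂) := hM₁o.inter hM₂o
  have hxM : f x ∈ M₁ ∩ M₂ := ⟨hxM₁, hxM₂⟩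
  have hMiff : ∀ w ∈ M₁ ∩ M₂, w ∈ f '' Ux ↔ w ∈ f '' Uy' :=
    fun w hw => ⟨fun ha => hM₁sub hw.1 ha, fun hb => hM₂sub hw.2 hb⟩
  refine mem_of_superset ((hUxo.inter (hMo.preimage hf)).mem_nhds ⟨hxUx, hxM⟩) ?_
  rintro x' ⟨hx'Ux, hx'M⟩
  have hz : f x' ∈ f '' Uy' := (hMiff _ hx'M).1 (mem_image_of_mem f hx'Ux)
  obtain ⟨y', hy'Uy', hfy'⟩ := hz
  refine ⟨y', hy'Uy'.2, hfy'.symm, ?_⟩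
  rw [mapNhdsEq f hf hUxo hpx hx'Ux, mapNhdsEq f hf hUy'o hpy' hy'Uy', hfy',
    traceEq hMo hx'M hMiff]

/-- part of Proposition 5: Let `f : X → Y` be a continuous map between
topological spaces that is locally open onto its image.  Then the quotient map
`q^f : X → X^f` is open; equivalently, for every open set `U ⊆ X` the saturation
`{x ∈ X : ∃ y ∈ U, f x = f y ∧ f(𝓝 x) = f(𝓝 y)}` is open in `X`. -/
theorem stmt_7 {X Y : Type*} [TopologicalSpace X] [TopologicalSpace Y]
    (f : X → Y) (hf : Continuous f) (h : IsLocallyOpenOntoImage f) :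
    IsOpenMap (qMap f) ∧
    ∀ U : Set X, IsOpen U →
      IsOpen {x : X | ∃ y ∈ U, f x = f y ∧ Filter.map f (nhds x) = Filter.map f (nhds y)} := by
  have h2 : ∀ U : Set X, IsOpen U →
      IsOpen {x : X | ∃ y ∈ U, f x = f y ∧ Filter.map f (nhds x) = Filter.map f (nhds y)} :=
    satOpen f hf h
  refine ⟨?_, h2⟩
  intro U hU
  have hpre : qMap f ⁻¹' (qMap f '' U) =
      {x : X | ∃ y ∈ U, f x = f y ∧ Filter.map f (nhds x) = Filter.map f (nhds y)} := by
    ext x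
    simp only [Set.mem_preimage, Set.mem_image, Set.mem_setOf_eq]
    constructor
    · rintro ⟨y, hy, hq⟩
      have hr : (nhdsSetoid f).r y x := Quotient.exact hq
      exact ⟨y, hy, hr.1.symm, hr.2.symm⟩
    · rintro ⟨y, hy, h1, h2'⟩
      exact ⟨y, hy, Quotient.sound (⟨h1.symm, h2'.symm⟩ : (nhdsSetoid f).r y x)⟩
  have : IsOpen (qMap f ⁻¹' (qMap f '' U)) := hpre ▸ h2 U hU
  exact isOpen_coinduced.2 this
end

section
/- Let f : X → Y be a continuous map between topological spaces that is locally open onto its image. Then the induced map f# : X^f → Y is filtered: f# is locally open onto its image, and the map sending a point p ∈ X^f to the pair (f#(p), f#(𝓝(p))) is injective. -/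
open Filter Set Topology

section helpers
variable {X Y : Type*} [TopologicalSpace X] [TopologicalSpace Y] {f : X → Y}

/-- The local-openness property passes from an open set to any subset. -/
theorem stmt8_prop_mono {U V : Set X}
    (hU : ∀ W : Set X, W ⊆ U → IsOpen W → ∃ O : Set Y, IsOpen O ∧ f '' W = O ∩ f '' U)
    (hVU : V ⊆ U) :
    ∀ W : Set X, W ⊆ V → IsOpen W → ∃ O : Set Y, IsOpen O ∧ f '' W = O ∩ f '' V := by
  intro W hWV hW
  obtain ⟨O, hO, hOW⟩ := hU W (hWV.trans hVU) hW
  refine ⟨O, hO, subset_antisymm ?_ ?_⟩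
  · exact subset_inter (hOW ▸ inter_subset_left) (image_mono (f := f) hWV)
  · intro y hy
    rw [hOW]
    exact ⟨hy.1, image_mono (f := f) hVU hy.2⟩

/-- On a set where `f` is open onto its image, the image filter of the neighbourhood
filter is the trace of the neighbourhood filter of the image point on `f '' U`. -/
theorem stmt8_map_nhds_eq (hf : Continuous f) {U : Set X} (hUo : IsOpen U)
    (hP : ∀ W : Set X, W ⊆ U → IsOpen W → ∃ O : Set Y, IsOpen O ∧ f '' W = O ∩ f '' U)
    {x : X} (hx : x ∈ U) :
    Filter.map f (nhds x) = nhds (f x) ⊓ Filter.principal (f '' U) := by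
  refine le_antisymm (le_inf hf.continuousAt ?_) ?_
  · exact le_principal_iff.2 (image_mem_map (hUo.mem_nhds hx))
  · intro S hS
    rw [mem_map] at hS
    obtain ⟨V, hVsub, hVo, hxV⟩ := mem_nhds_iff.1 (inter_mem hS (hUo.mem_nhds hx))
    obtain ⟨O, hOo, hfVO⟩ := hP V (hVsub.trans inter_subset_right) hVo
    have hfxO : f x ∈ O := (hfVO ▸ mem_image_of_mem f hxV).1
    have hsub : O ∩ f '' U ⊆ S := by
      rw [← hfVO]
      exact image_subset_iff.2 (hVsub.trans inter_subset_left)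
    exact mem_of_superset (inter_mem_inf (hOo.mem_nhds hfxO) (mem_principal_self _)) hsub

/-- The key technical lemma: the saturation (for the relation of `nhdsSetoid f`) of an
open set is a neighbourhood of each of its points. -/
theorem stmt8_saturation_nhd (hf : Continuous f) (h : IsLocallyOpenOntoImage f)
    {W : Set X} (hWo : IsOpen W) {z : X}
    (hz : ∃ x ∈ W, f z = f x ∧ Filter.map f (nhds z) = Filter.map f (nhds x)) :
    ∃ W' : Set X, IsOpen W' ∧ z ∈ W' ∧
      ∀ z' ∈ W', ∃ x' ∈ W, f z' = f x' ∧
        Filter.map f (nhds z') = Filter.map f (nhds x') := by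
  obtain ⟨x, hxW, hfzx, hfilt⟩ := hz
  obtain ⟨Ux, hUxo, hxUx, hPx⟩ := h x
  set V : Set X := W ∩ Ux with hVdef
  have hVo : IsOpen V := hWo.inter hUxo
  have hxV : x ∈ V := ⟨hxW, hxUx⟩
  have hPV := stmt8_prop_mono hPx (inter_subset_right : V ⊆ Ux)
  have hmapx : Filter.map f (nhds x) = nhds (f x) ⊓ Filter.principal (f '' V) :=
    stmt8_map_nhds_eq hf hVo hPV hxV
  obtain ⟨Uz, hUzo, hzUz, hPz⟩ := h z
  have hfV_mem : f '' V ∈ Filter.map f (nhds z) := by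
    rw [hfilt]
    exact image_mem_map (hVo.mem_nhds hxV)
  rw [mem_map] at hfV_mem
  obtain ⟨W₀, hW₀sub, hW₀o, hzW₀⟩ :=
    mem_nhds_iff.1 (inter_mem hfV_mem (hUzo.mem_nhds hzUz))
  have hW₀Uz : W₀ ⊆ Uz := hW₀sub.trans inter_subset_right
  have hW₀fV : W₀ ⊆ f ⁻¹' (f '' V) := hW₀sub.trans inter_subset_left
  have hPW₀ := stmt8_prop_mono hPz hW₀Uz
  have hmapz : Filter.map f (nhds z) = nhds (f z) ⊓ Filter.principal (f '' W₀) :=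
    stmt8_map_nhds_eq hf hW₀o hPW₀ hzW₀
  have E : nhds (f z) ⊓ Filter.principal (f '' W₀)
      = nhds (f z) ⊓ Filter.principal (f '' V) := by
    rw [← hmapz, hfilt, hmapx, hfzx]
  have hfW₀_mem : f '' W₀ ∈ nhds (f z) ⊓ Filter.principal (f '' V) := by
    rw [← E]
    exact mem_inf_of_right (mem_principal_self _)
  rw [mem_inf_principal] at hfW₀_mem
  obtain ⟨O₁, hO₁sub, hO₁o, hzO₁⟩ := mem_nhds_iff.1 hfW₀_mem
  have hO₁key : ∀ y ∈ O₁, y ∈ f '' V → y ∈ f '' W₀ := fun y hy => hO₁sub hy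
  refine ⟨W₀ ∩ f ⁻¹' O₁, hW₀o.inter (hO₁o.preimage hf), ⟨hzW₀, hzO₁⟩, ?_⟩
  intro z' hz'
  obtain ⟨hz'W₀, hz'O₁⟩ := hz'
  obtain ⟨x', hx'V, hfx'⟩ := hW₀fV hz'W₀
  refine ⟨x', hx'V.1, hfx'.symm, ?_⟩
  set W' : Set X := W₀ ∩ f ⁻¹' O₁ with hW'def
  have hW'o : IsOpen W' := hW₀o.inter (hO₁o.preimage hf)
  have hW'Uz : W' ⊆ Uz := inter_subset_left.trans hW₀Uz
  have hmapz' : Filter.map f (nhds z') = nhds (f z') ⊓ Filter.principal (f '' W') :=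
    stmt8_map_nhds_eq hf hW'o (stmt8_prop_mono hPz hW'Uz) ⟨hz'W₀, hz'O₁⟩
  have hmapx' : Filter.map f (nhds x') = nhds (f x') ⊓ Filter.principal (f '' V) :=
    stmt8_map_nhds_eq hf hVo hPV hx'V
  rw [hmapz', hmapx', hfx']
  have hfW'fV : f '' W' ⊆ f '' V := by
    apply image_subset_iff.2
    exact (inter_subset_left.trans hW₀fV)
  refine le_antisymm (inf_le_inf_left _ (principal_mono.2 hfW'fV)) ?_
  have hmem : f '' W' ∈ nhds (f z') ⊓ Filter.principal (f '' V) := by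
    obtain ⟨O₂, hO₂o, hO₂eq⟩ := stmt8_prop_mono hPz hW₀Uz W' inter_subset_left hW'o
    have hz'W' : f z' ∈ f '' W' := mem_image_of_mem f ⟨hz'W₀, hz'O₁⟩
    have hz'O₂ : f z' ∈ O₂ := (hO₂eq ▸ hz'W').1
    rw [mem_inf_principal]
    refine mem_of_superset ((hO₁o.inter hO₂o).mem_nhds ⟨hz'O₁, hz'O₂⟩) ?_
    rintro y ⟨hyO₁, hyO₂⟩ hyV
    have : y ∈ f '' W₀ := hO₁key y hyO₁ hyV
    rw [hO₂eq]
    exact ⟨hyO₂, this⟩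
  exact le_inf inf_le_left (le_principal_iff.2 hmem)

end helpers

/-- part of Proposition 5: Let `f : X → Y` be a continuous map between
topological spaces that is locally open onto its image.  Then the induced map
`f# : X^f → Y` is filtered: `f#` is locally open onto its image, and the map sending a
point `p ∈ X^f` to the pair `(f#(p), f#(𝓝 p))` is injective. -/
theorem stmt_8 {X Y : Type*} [TopologicalSpace X] [TopologicalSpace Y]
    (f : X → Y) (hf : Continuous f) (h : IsLocallyOpenOntoImage f) :
    IsLocallyOpenOntoImage (fSharp f) ∧
    Function.Injective
      (fun p : SpaceXf f => (fSharp f p, Filter.map (fSharp f) (nhds p))) := by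
  have hq_cont : Continuous (qMap f) := continuous_quot_mk
  have hsurj : Function.Surjective (qMap f) := Quotient.exists_rep
  -- the quotient map is open
  have hq_open : IsOpenMap (qMap f) := by
    intro W hWo
    rw [isOpen_coinduced]
    rw [isOpen_iff_forall_mem_open]
    intro z hz
    obtain ⟨x, hxW, hqx⟩ := hz
    have hrel : f x = f z ∧ Filter.map f (nhds x) = Filter.map f (nhds z) :=
      Quotient.eq.1 hqx
    obtain ⟨W', hW'o, hzW', hsat⟩ :=
      stmt8_saturation_nhd hf h hWo ⟨x, hxW, hrel.1.symm, hrel.2.symm⟩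
    refine ⟨W', fun z' hz' => ?_, hW'o, hzW'⟩
    obtain ⟨x', hx'W, he1, he2⟩ := hsat z' hz'
    exact ⟨x', hx'W, Quotient.sound ⟨he1.symm, he2.symm⟩⟩
  -- neighbourhood filters in the quotient
  have key : ∀ x : X, Filter.map (fSharp f) (nhds (qMap f x)) = Filter.map f (nhds x) := by
    intro x
    have h1 : nhds (qMap f x) = Filter.map (qMap f) (nhds x) :=
      le_antisymm (hq_open.nhds_le x) hq_cont.continuousAt
    rw [h1, Filter.map_map]
    rfl
  constructor
  · -- f# is locally open onto its image
    intro p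
    obtain ⟨x, rfl⟩ := hsurj p
    obtain ⟨U, hUo, hxU, hP⟩ := h x
    refine ⟨qMap f '' U, hq_open U hUo, mem_image_of_mem _ hxU, ?_⟩
    intro Ws hWsub hWopen
    have hWpre_o : IsOpen (qMap f ⁻¹' Ws) := hWopen.preimage hq_cont
    have him1 : fSharp f '' Ws = f '' (qMap f ⁻¹' Ws) := by
      conv_lhs => rw [← Set.image_preimage_eq Ws hsurj]
      rw [Set.image_image]
      rfl
    have him2 : fSharp f '' (qMap f '' U) = f '' U := by
      rw [Set.image_image]
      rfl
    have heq : f '' (qMap f ⁻¹' Ws) = f '' (qMap f ⁻¹' Ws ∩ U) := by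
      refine subset_antisymm ?_ (image_mono (f := f) inter_subset_left)
      rintro y ⟨z, hzW, rfl⟩
      obtain ⟨x₀, hx₀U, hqx₀⟩ := hWsub hzW
      have hrel : f x₀ = f z ∧ Filter.map f (nhds x₀) = Filter.map f (nhds z) :=
        Quotient.eq.1 hqx₀
      have hx₀W : x₀ ∈ qMap f ⁻¹' Ws := by
        show qMap f x₀ ∈ Ws
        rw [hqx₀]; exact hzW
      exact ⟨x₀, ⟨hx₀W, hx₀U⟩, hrel.1⟩
    obtain ⟨O, hOo, hOeq⟩ := hP (qMap f ⁻¹' Ws ∩ U) inter_subset_right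
      (hWpre_o.inter hUo)
    exact ⟨O, hOo, by rw [him1, him2, heq, hOeq]⟩
  · -- injectivity
    intro p p' hpp'
    obtain ⟨x, rfl⟩ := hsurj p
    obtain ⟨x', rfl⟩ := hsurj p'
    rw [Prod.mk.injEq] at hpp'
    obtain ⟨h1, h2⟩ := hpp'
    rw [key x, key x'] at h2
    exact Quotient.sound ⟨h1, h2⟩
end

section
/- Let f : X → Y be a filtered continuous map between topological spaces. Then every point x ∈ X has an open neighborhood U such that the restriction of f to U is a homeomorphism of U onto the subspace f(U) of Y. -/
/-- last part of Proposition 5: Let `f : X → Y` be a filtered continuous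
map between topological spaces, i.e. `f` is locally open onto its image and
`x ↦ (f x, f(𝓝 x))` is injective.  Then every point `x ∈ X` has an open neighbourhood `U`
such that the restriction of `f` to `U` is a homeomorphism of `U` onto the subspace
`f(U)` of `Y` (i.e. `f` restricted to `U` is a topological embedding into `Y`). -/
theorem stmt_9 {X Y : Type*} [TopologicalSpace X] [TopologicalSpace Y]
    (f : X → Y) (hf : Continuous f) (h₁ : IsLocallyOpenOntoImage f)
    (h₂ : Function.Injective (fun x : X => (f x, Filter.map f (nhds x)))) :
    ∀ x : X, ∃ U : Set X, IsOpen U ∧ x ∈ U ∧ Topology.IsEmbedding (U.restrict f) := by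
  intro x
  obtain ⟨U, hU, hxU, hW⟩ := h₁ x
  refine ⟨U, hU, hxU, ?_⟩
  -- Key: for a ∈ U, the image filter is 𝓝 (f a) ⊓ 𝓟 (f '' U).
  have key : ∀ a ∈ U, Filter.map f (nhds a) = nhds (f a) ⊓ Filter.principal (f '' U) := by
    intro a ha
    apply le_antisymm
    · exact le_inf (hf.continuousAt) (Filter.le_principal_iff.2
        (Filter.image_mem_map (hU.mem_nhds ha)))
    · intro s hs
      rw [Filter.mem_map] at hs
      obtain ⟨W', hW'sub, hW'open, haW'⟩ := mem_nhds_iff.1 hs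
      obtain ⟨O, hOopen, hOeq⟩ := hW (W' ∩ U) Set.inter_subset_right (hW'open.inter hU)
      have hfa : f a ∈ O := by
        have : f a ∈ f '' (W' ∩ U) := ⟨a, ⟨haW', ha⟩, rfl⟩
        rw [hOeq] at this; exact this.1
      refine Filter.mem_of_superset
        (Filter.inter_mem_inf (hOopen.mem_nhds hfa) (Filter.mem_principal_self _)) ?_
      rw [← hOeq]
      rintro y ⟨u, ⟨huW', _⟩, rfl⟩
      exact hW'sub huW'
  have hinj : Set.InjOn f U := by
    intro a ha b hb hab
    apply h₂
    dsimp only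
    exact Prod.ext hab (by rw [key a ha, key b hb, hab])
  -- corestriction g : U → f '' U
  set g : U → (f '' U : Set Y) := fun u => ⟨f u, ⟨u, u.2, rfl⟩⟩ with hg
  have hgcont : Continuous g := Continuous.subtype_mk (hf.comp continuous_subtype_val) _
  have hginj : Function.Injective g := by
    intro u v huv
    exact Subtype.ext (hinj u.2 v.2 (congrArg Subtype.val huv))
  have hgopen : IsOpenMap g := by
    intro S hS
    obtain ⟨V, hVopen, rfl⟩ := isOpen_induced_iff.1 hS
    obtain ⟨O, hOopen, hOeq⟩ := hW (V ∩ U) Set.inter_subset_right (hVopen.inter hU)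
    have himg : g '' (Subtype.val ⁻¹' V) = Subtype.val ⁻¹' O := by
      ext ⟨y, hy⟩
      simp only [Set.mem_image, Set.mem_preimage, hg]
      constructor
      · rintro ⟨⟨u, hu⟩, huV, he⟩
        obtain rfl : f u = y := congrArg Subtype.val he
        have : f u ∈ f '' (V ∩ U) := ⟨u, ⟨huV, hu⟩, rfl⟩
        rw [hOeq] at this; exact this.1
      · intro hyO
        have : y ∈ f '' (V ∩ U) := by rw [hOeq]; exact ⟨hyO, hy⟩
        obtain ⟨u, ⟨huV, huU⟩, rfl⟩ := this
        exact ⟨⟨u, huU⟩, huV, rfl⟩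
    rw [himg]
    exact hOopen.preimage continuous_subtype_val
  have hge : Topology.IsEmbedding g :=
    (Topology.IsOpenEmbedding.of_continuous_injective_isOpenMap hgcont hginj hgopen).isEmbedding
  have : U.restrict f = Subtype.val ∘ g := rfl
  rw [this]
  exact Topology.IsEmbedding.subtypeVal.comp hge
end

section
/- Let Y be a topological space equipped with a local convexity structure. Then the closure of any convex subset of Y is convex. -/
universe u v w

/-- A convexity-space structure on an (open) subset `U` of a topological space `Y`,
given by a map `C` assigning to points `x, y ∈ U` a subset `C x y ⊆ U`:
`U` with its subspace topology is Hausdorff, `C` is continuous (as a map into the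
power set of `U` with the topology generated by `{A | A ⊆ W}`, `W` relatively open),
(C1) each `C x y` is convex, (C2) each `C x y` is minimal among the connected subsets of
`U` containing `x` and `y`, and (C3) `U` has a basis of convex (relatively) open sets.
Since `U` is required to be open in `Y`, relatively open subsets of `U` are exactly the
open subsets of `Y` contained in `U`. -/
structure IsConvexitySpaceOn {Y : Type*} [TopologicalSpace Y] (U : Set Y)
    (C : Y → Y → Set Y) : Prop where
  /-- The carrier is open in the ambient space. -/
  isOpen : IsOpen U
  /-- `U` is Hausdorff in its subspace topology. -/
  t2 : ∀ x ∈ U, ∀ y ∈ U, x ≠ y →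
    ∃ V W : Set Y, IsOpen V ∧ IsOpen W ∧ x ∈ V ∧ y ∈ W ∧ V ∩ W ∩ U = ∅
  /-- `C x y` is a subset of `U` for `x, y ∈ U`. -/
  segment_subset : ∀ x ∈ U, ∀ y ∈ U, C x y ⊆ U
  /-- `C x y` contains `x`. -/
  mem_left : ∀ x ∈ U, ∀ y ∈ U, x ∈ C x y
  /-- `C x y` contains `y`. -/
  mem_right : ∀ x ∈ U, ∀ y ∈ U, y ∈ C x y
  /-- `C x y` is connected. -/
  preconnected : ∀ x ∈ U, ∀ y ∈ U, IsPreconnected (C x y)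
  /-- (C1): `C x y` is convex. -/
  convex : ∀ x ∈ U, ∀ y ∈ U, ∀ u ∈ C x y, ∀ v ∈ C x y, C u v ⊆ C x y
  /-- (C2): `C x y` is minimal among the connected subsets of `U` containing `x, y`. -/
  minimal : ∀ x ∈ U, ∀ y ∈ U, ∀ A : Set Y, A ⊆ C x y → x ∈ A → y ∈ A →
    IsPreconnected A → A = C x y
  /-- Continuity of `(x, y) ↦ C x y`. -/
  continuity : ∀ x ∈ U, ∀ y ∈ U, ∀ W : Set Y, IsOpen W → C x y ⊆ W →
    ∃ V V' : Set Y, IsOpen V ∧ IsOpen V' ∧ x ∈ V ∧ y ∈ V' ∧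
      ∀ x' ∈ V ∩ U, ∀ y' ∈ V' ∩ U, C x' y' ⊆ W
  /-- (C3): `U` has a basis of convex open sets. -/
  basis : ∀ x ∈ U, ∀ W : Set Y, IsOpen W → x ∈ W →
    ∃ V : Set Y, IsOpen V ∧ x ∈ V ∧ V ⊆ W ∩ U ∧ ∀ u ∈ V, ∀ v ∈ V, C u v ⊆ V

/-- A *local convexity structure* on a topological space `Y`: an open cover `atlas` of `Y`
by convexity spaces (chart `U` carrying the convexity map `seg U`) such that every convex
open subspace of a chart is again a chart, with the restricted convexity map. -/
structure LocalConvexityStructure (Y : Type*) [TopologicalSpace Y] where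
  /-- The charts. -/
  atlas : Set (Set Y)
  /-- The convexity map of each chart: `seg U x y` is the minimal connected subset of the
  chart `U` joining `x` and `y`. -/
  seg : Set Y → Y → Y → Set Y
  /-- The charts cover `Y`. -/
  covers : ∀ y : Y, ∃ U ∈ atlas, y ∈ U
  /-- Each chart is a convexity space. -/
  convexity : ∀ U ∈ atlas, IsConvexitySpaceOn U (seg U)
  /-- Every convex open subspace of a chart is a chart, with the restricted map. -/
  subchart : ∀ U ∈ atlas, ∀ V : Set Y, V ⊆ U → IsOpen V →
    (∀ u ∈ V, ∀ v ∈ V, seg U u v ⊆ V) →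
    V ∈ atlas ∧ ∀ u ∈ V, ∀ v ∈ V, seg V u v = seg U u v

/-- A subset `A ⊆ Y` is convex (w.r.t. a local convexity structure) if `A ∩ U` is convex
in `U` for every chart `U`. -/
def LocalConvexityStructure.IsConvexSet {Y : Type*} [TopologicalSpace Y]
    (𝒱 : LocalConvexityStructure Y) (A : Set Y) : Prop :=
  ∀ U ∈ 𝒱.atlas, ∀ u ∈ A ∩ U, ∀ v ∈ A ∩ U, 𝒱.seg U u v ⊆ A ∩ U

/-- The convex hull of `A ⊆ Y`: the smallest convex set containing `A`. -/
def LocalConvexityStructure.hull {Y : Type*} [TopologicalSpace Y]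
    (𝒱 : LocalConvexityStructure Y) (A : Set Y) : Set Y :=
  ⋂₀ {B : Set Y | A ⊆ B ∧ 𝒱.IsConvexSet B}

/-- `U` is a member of `𝒱_e` with target chart `V`: `U` is an open subset of `Z` mapped by
`e` homeomorphically (injectively and relatively openly; `e` is continuous in context)
onto a convex subspace of the chart `V` of `Y`. -/
def IsEtaleChartTo {Z Y : Type*} [TopologicalSpace Z] [TopologicalSpace Y]
    (𝒱 : LocalConvexityStructure Y) (e : Z → Y) (U : Set Z) (V : Set Y) : Prop :=
  IsOpen U ∧ Set.InjOn e U ∧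
  (∀ W : Set Z, W ⊆ U → IsOpen W → ∃ O : Set Y, IsOpen O ∧ e '' W = O ∩ e '' U) ∧
  V ∈ 𝒱.atlas ∧ e '' U ⊆ V ∧
  ∀ p ∈ e '' U, ∀ q ∈ e '' U, 𝒱.seg V p q ⊆ e '' U

/-- `U ∈ 𝒱_e`: `U` is an open subset of `Z` mapped by `e` homeomorphically onto a convex
subspace of some chart of `Y`. -/
def IsEtaleChart {Z Y : Type*} [TopologicalSpace Z] [TopologicalSpace Y]
    (𝒱 : LocalConvexityStructure Y) (e : Z → Y) (U : Set Z) : Prop :=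
  ∃ V : Set Y, IsEtaleChartTo 𝒱 e U V

/-- A continuous map `e : Z → Y` from a connected space `Z` is *étale* (w.r.t. a local
convexity structure on `Y`) if `e` is closed and the charts `𝒱_e` cover `Z`. -/
structure IsEtale {Z Y : Type*} [TopologicalSpace Z] [TopologicalSpace Y]
    (𝒱 : LocalConvexityStructure Y) (e : Z → Y) : Prop where
  continuous : Continuous e
  connectedSpace : ConnectedSpace Z
  isClosedMap : IsClosedMap e
  charts_cover : ∀ z : Z, ∃ U : Set Z, IsEtaleChart 𝒱 e U ∧ z ∈ U

/-- `e : Z → Y` is *generated* by `F ⊆ Z` if there is no proper closed connected subset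
`A ⊊ Z` containing `F` such that `e(U ∩ A)` is convex for all `U ∈ 𝒱_e`. -/
def Generates {Z Y : Type*} [TopologicalSpace Z] [TopologicalSpace Y]
    (𝒱 : LocalConvexityStructure Y) (e : Z → Y) (F : Set Z) : Prop :=
  ¬ ∃ A : Set Z, A ≠ Set.univ ∧ IsClosed A ∧ IsPreconnected A ∧ F ⊆ A ∧
      ∀ U : Set Z, IsEtaleChart 𝒱 e U → 𝒱.IsConvexSet (e '' (U ∩ A))

/-- A *geodesic manifold*: a Hausdorff space `Y` with a local convexity structure such that
(G1) the closure of the convex hull of every finite set is compact, and (G2) for every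
étale map `e : Z → Y` with `Z` compact that is generated by a two-element set
`{x, y} ⊆ Z`, every connected subset of `Z` containing `x` and `y` is all of `Z`. -/
structure IsGeodesicManifold {Y : Type v} [TopologicalSpace Y]
    (𝒱 : LocalConvexityStructure Y) : Prop where
  t2 : T2Space Y
  /-- (G1). -/
  hull_compact : ∀ F : Set Y, F.Finite → IsCompact (closure (𝒱.hull F))
  /-- (G2). -/
  geodesic_minimal : ∀ (Z : Type v) [TopologicalSpace Z] (e : Z → Y),
    CompactSpace Z → IsEtale 𝒱 e → ∀ x y : Z, Generates 𝒱 e {x, y} →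
    ∀ A : Set Z, IsPreconnected A → x ∈ A → y ∈ A → A = Set.univ

/-- Star-finiteness of the convexity space `(U, C)` (relative to the ambient space `Y`,
`U` being open in `Y`): every closed star in `U` has a finite end set.  A star with center
`x ∈ U` and end set `E ⊆ U \ {x}` is the union `S = ⋃ z ∈ E, C x z` where the segments
`C x z` pairwise intersect exactly in `{x}` and the subspace topology of `S` is the finest
topology making all inclusions `C x z ↪ S` continuous (i.e. every `Z ⊆ S` whose trace on
each `C x z` is closed in `C x z` is closed in `S`); the star is closed if `S` is closed
in `U`. -/
def StarFiniteOn {Y : Type*} [TopologicalSpace Y] (U : Set Y) (C : Y → Y → Set Y) : Prop :=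
  ∀ x ∈ U, ∀ E : Set Y, E ⊆ U \ {x} →
    (∀ z ∈ E, ∀ z' ∈ E, z ≠ z' → C x z ∩ C x z' = {x}) →
    (∀ Z : Set Y, Z ⊆ (⋃ z ∈ E, C x z) →
      (∀ z ∈ E, ∃ F : Set Y, IsClosed F ∧ Z ∩ C x z = F ∩ C x z) →
      ∃ F : Set Y, IsClosed F ∧ Z = F ∩ (⋃ z ∈ E, C x z)) →
    (∃ F : Set Y, IsClosed F ∧ (⋃ z ∈ E, C x z) = F ∩ U) →
    E.Finite

/-- A *geodesic q-manifold*: a geodesic manifold all of whose charts are star-finite and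
regular (as subspaces). -/
structure IsGeodesicQManifold {Y : Type v} [TopologicalSpace Y]
    (𝒱 : LocalConvexityStructure Y) extends IsGeodesicManifold 𝒱 : Prop where
  starFinite : ∀ U ∈ 𝒱.atlas, StarFiniteOn U (𝒱.seg U)
  regular : ∀ U ∈ 𝒱.atlas, RegularSpace U

/-- A *geodesic* in `Y` joining `p` and `q`: an étale map `e : Z → Y` with `Z` compact,
generated by a two-element set `{x, y} ⊆ Z`, whose end points are `e x = p` and
`e y = q`. -/
structure GeodesicConnecting {Y : Type v} [TopologicalSpace Y]
    (𝒱 : LocalConvexityStructure Y) (p q : Y) : Type (v + 1) where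
  Z : Type v
  [ts : TopologicalSpace Z]
  e : Z → Y
  x : Z
  y : Z
  compact : CompactSpace Z
  etale : IsEtale 𝒱 e
  generates : Generates 𝒱 e {x, y}
  endpoint_left : e x = p
  endpoint_right : e y = q

/-- A subset `A ⊆ Y` is *weakly convex* if any two of its points are the end points of a
geodesic in `Y`. -/
def LocalConvexityStructure.WeaklyConvex {Y : Type v} [TopologicalSpace Y]
    (𝒱 : LocalConvexityStructure Y) (A : Set Y) : Prop :=
  ∀ p ∈ A, ∀ q ∈ A, Nonempty (GeodesicConnecting 𝒱 p q)

section Aux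

open Set

variable {Y : Type*} [TopologicalSpace Y] {U : Set Y} {C : Y → Y → Set Y}

namespace IsConvexitySpaceOn

variable (H : IsConvexitySpaceOn U C)

include H

lemma memU {x y p : Y} (hx : x ∈ U) (hy : y ∈ U) (hp : p ∈ C x y) : p ∈ U :=
  H.segment_subset x hx y hy hp

lemma seg_symm {x y : Y} (hx : x ∈ U) (hy : y ∈ U) : C x y = C y x :=
  Set.Subset.antisymm
    (H.convex y hy x hx x (H.mem_right y hy x hx) y (H.mem_left y hy x hx))
    (H.convex x hx y hy y (H.mem_right x hx y hy) x (H.mem_left x hx y hy))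

lemma seg_self {x : Y} (hx : x ∈ U) : C x x = {x} :=
  (H.minimal x hx x hx {x} (Set.singleton_subset_iff.2 (H.mem_left x hx x hx)) rfl rfl
    isPreconnected_singleton).symm

lemma seg_union {x y w : Y} (hx : x ∈ U) (hy : y ∈ U) (hw : w ∈ C x y) :
    C x w ∪ C w y = C x y := by
  have hwU : w ∈ U := H.memU hx hy hw
  have h1 : C x w ⊆ C x y := H.convex x hx y hy x (H.mem_left x hx y hy) w hw
  have h2 : C w y ⊆ C x y := H.convex x hx y hy w hw y (H.mem_right x hx y hy)
  exact H.minimal x hx y hy _ (Set.union_subset h1 h2)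
    (Or.inl (H.mem_left x hx w hwU)) (Or.inr (H.mem_right w hwU y hy))
    (IsPreconnected.union w (H.mem_right x hx w hwU) (H.mem_left w hwU y hy)
      (H.preconnected x hx w hwU) (H.preconnected w hwU y hy))

/-- If `p ∈ C x w` and `w ∈ C x p` then `p = w`. -/
lemma noswap {x w p : Y} (hx : x ∈ U) (hw : w ∈ U) (hp : p ∈ U)
    (h1 : p ∈ C x w) (h2 : w ∈ C x p) : p = w := by
  by_contra hpw
  have hxw : x ≠ w := by
    rintro rfl
    rw [H.seg_self hx] at h1
    exact hpw h1
  have hsub1 : C x p ⊆ C x w := H.convex x hx w hw x (H.mem_left x hx w hw) p h1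
  have hsub2 : C x w ⊆ C x p := H.convex x hx p hp x (H.mem_left x hx p hp) w h2
  have hG : C x w = C x p := Set.Subset.antisymm hsub2 hsub1
  have hwG : w ∈ C x p := h2
  have hpG : p ∈ C x p := H.mem_right x hx p hp
  have hxG : x ∈ C x p := H.mem_left x hx p hp
  have hpcG : IsPreconnected (C x p) := H.preconnected x hx p hp
  have hminp : ∀ A : Set Y, A ⊆ C x p → x ∈ A → p ∈ A → IsPreconnected A → A = C x p :=
    H.minimal x hx p hp
  have hminw : ∀ A : Set Y, A ⊆ C x p → x ∈ A → w ∈ A → IsPreconnected A → A = C x p := by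
    intro A hA1 hA2 hA3 hA4
    have h := H.minimal x hx w hw A (by rw [hG]; exact hA1) hA2 hA3 hA4
    rw [h, hG]
  by_cases hpc : IsPreconnected (C x p \ {w})
  · have heq := hminp (C x p \ {w}) Set.diff_subset ⟨hxG, hxw⟩ ⟨hpG, hpw⟩ hpc
    have hnw : w ∉ C x p \ {w} := fun h => h.2 rfl
    rw [heq] at hnw
    exact hnw hwG
  · unfold IsPreconnected at hpc
    push_neg at hpc
    obtain ⟨P, Q, hP, hQ, hcov, hne1, hne2, hempty⟩ := hpc
    have key : ∀ P Q : Set Y, IsOpen P → IsOpen Q → C x p \ {w} ⊆ P ∪ Q →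
        (C x p \ {w}) ∩ (P ∩ Q) = ∅ → x ∈ P → ((C x p \ {w}) ∩ Q).Nonempty → False := by
      intro P Q hP hQ hcov hempty hxP hneQ
      set M := ((C x p \ {w}) ∩ P) ∪ {w} with hM
      have hMG : M ⊆ C x p := by
        rintro z (⟨⟨h, _⟩, _⟩ | hz)
        · exact h
        · rw [Set.mem_singleton_iff.1 hz]; exact hwG
      have hMpre : IsPreconnected M := by
        intro Pp Qq hPp hQq hMcov hMP hMQ
        by_contra h0
        rw [Set.not_nonempty_iff_eq_empty] at h0
        have core : ∀ Pp Qq : Set Y, IsOpen Pp → IsOpen Qq → M ⊆ Pp ∪ Qq →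
            M ∩ (Pp ∩ Qq) = ∅ → w ∈ Pp → (M ∩ Qq).Nonempty → False := by
          intro Pp Qq hPp hQq hMcov h0 hwPp hMQq
          obtain ⟨a, haM, haQq⟩ := hMQq
          have hwQq : w ∉ Qq := fun h =>
            Set.eq_empty_iff_forall_notMem.1 h0 w ⟨Or.inr rfl, hwPp, h⟩
          have haw : a ≠ w := fun h => hwQq (h ▸ haQq)
          have haGP : a ∈ (C x p \ {w}) ∩ P := by
            rcases haM with h | h
            · exact h
            · exact absurd (Set.mem_singleton_iff.1 h) haw
          have hGcov : C x p ⊆ (Qq ∩ P) ∪ (Pp ∪ Q) := by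
            intro g hg
            by_cases hgw : g = w
            · exact Or.inr (Or.inl (hgw ▸ hwPp))
            · rcases hcov ⟨hg, hgw⟩ with hgP | hgQ
              · have hgM : g ∈ M := Or.inl ⟨⟨hg, hgw⟩, hgP⟩
                rcases hMcov hgM with h | h
                · exact Or.inr (Or.inl h)
                · exact Or.inl ⟨h, hgP⟩
              · exact Or.inr (Or.inr hgQ)
          obtain ⟨z, hzG, hz1, hz2⟩ := hpcG (Qq ∩ P) (Pp ∪ Q) (hQq.inter hP) (hPp.union hQ)
            hGcov ⟨a, haGP.1.1, haQq, haGP.2⟩ ⟨w, hwG, Or.inl hwPp⟩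
          have hzw : z ≠ w := fun h => hwQq (h ▸ hz1.1)
          have hzGw : z ∈ C x p \ {w} := ⟨hzG, hzw⟩
          rcases hz2 with h | h
          · exact Set.eq_empty_iff_forall_notMem.1 h0 z ⟨Or.inl ⟨hzGw, hz1.2⟩, h, hz1.1⟩
          · exact Set.eq_empty_iff_forall_notMem.1 hempty z ⟨hzGw, hz1.2, h⟩
        rcases hMcov (Or.inr rfl : w ∈ M) with hwP | hwQ
        · exact core Pp Qq hPp hQq hMcov h0 hwP hMQ
        · exact core Qq Pp hQq hPp (by rwa [Set.union_comm]) (by rwa [Set.inter_comm Qq Pp])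
            hwQ hMP
      have hMeq : M = C x p := hminw M hMG (Or.inl ⟨⟨hxG, hxw⟩, hxP⟩) (Or.inr rfl) hMpre
      obtain ⟨q, hqGw, hqQ⟩ := hneQ
      have hqM : q ∈ M := by rw [hMeq]; exact hqGw.1
      rcases hqM with h | h
      · exact Set.eq_empty_iff_forall_notMem.1 hempty q ⟨hqGw, h.2, hqQ⟩
      · exact hqGw.2 (Set.mem_singleton_iff.1 h)
    rcases hcov ⟨hxG, hxw⟩ with hxP | hxQ
    · exact key P Q hP hQ hcov hempty hxP hne2
    · exact key Q P hQ hP (by rwa [Set.union_comm]) (by rwa [Set.inter_comm Q P]) hxQ hne1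

/-- If `w ∈ C x y` then `C x w ∩ C w y = {w}` (the nontrivial inclusion). -/
lemma seg_inter {x y w p : Y} (hx : x ∈ U) (hy : y ∈ U) (hw : w ∈ C x y)
    (hp1 : p ∈ C x w) (hp2 : p ∈ C w y) : p = w := by
  have hwU : w ∈ U := H.memU hx hy hw
  have hpU : p ∈ U := H.memU hx hwU hp1
  have hxw : C x w ⊆ C x y := H.convex x hx y hy x (H.mem_left x hx y hy) w hw
  have hpS : p ∈ C x y := hxw hp1
  have hK : C x p ∪ C p y = C x y := H.seg_union hx hy hpS
  have hwK : w ∈ C x p ∪ C p y := by rw [hK]; exact hw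
  rcases hwK with h | h
  · exact H.noswap hx hwU hpU hp1 h
  · have h1 : w ∈ C y p := by rw [← H.seg_symm hpU hy]; exact h
    have h2 : p ∈ C y w := by rw [← H.seg_symm hwU hy]; exact hp2
    exact H.noswap hy hwU hpU h2 h1

/-- The "open ray" set `{s ∈ U | w ∉ C x s}` is open. -/
lemma ray_open {x w : Y} (hx : x ∈ U) (hw : w ∈ U) :
    IsOpen {s | s ∈ U ∧ w ∉ C x s} := by
  rw [isOpen_iff_forall_mem_open]
  rintro s ⟨hsU, hws⟩
  have hWopen : IsOpen (U \ closure {w}) := H.isOpen.sdiff isClosed_closure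
  have hsub : C x s ⊆ U \ closure {w} := by
    intro z hz
    refine ⟨H.memU hx hsU hz, fun hzc => ?_⟩
    have hzw : z = w := by
      by_contra hne
      obtain ⟨V, W', hV, hW', hzV, hwW', hdisj⟩ := H.t2 z (H.memU hx hsU hz) w hw hne
      obtain ⟨q, hqV, hqw⟩ := _root_.mem_closure_iff.1 hzc V hV hzV
      rw [Set.mem_singleton_iff.1 hqw] at hqV
      exact Set.eq_empty_iff_forall_notMem.1 hdisj w ⟨⟨hqV, hwW'⟩, hw⟩
    rw [hzw] at hz
    exact hws hz
  obtain ⟨V, V', hV, hV', hxV, hsV', hkey⟩ := H.continuity x hx s hsU _ hWopen hsub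
  refine ⟨V' ∩ U, ?_, hV'.inter H.isOpen, ⟨hsV', hsU⟩⟩
  rintro z ⟨hzV', hzU⟩
  refine ⟨hzU, fun hwz => ?_⟩
  exact (hkey x ⟨hxV, hx⟩ z ⟨hzV', hzU⟩ hwz).2 (subset_closure rfl)

/-- The order characterization: for `s, r ∈ C x y`, `s ∈ C x r ↔ r ∈ C s y`. -/
lemma le_iff {x y s r : Y} (hx : x ∈ U) (hy : y ∈ U) (hs : s ∈ C x y) (hr : r ∈ C x y) :
    s ∈ C x r ↔ r ∈ C s y := by
  have hsU : s ∈ U := H.memU hx hy hs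
  have hrU : r ∈ U := H.memU hx hy hr
  constructor
  · intro h
    have hr' : r ∈ C x s ∪ C s y := by rw [H.seg_union hx hy hs]; exact hr
    rcases hr' with h' | h'
    · have hrs : r = s := H.noswap hx hsU hrU h' h
      rw [hrs]; exact H.mem_left s hsU y hy
    · exact h'
  · intro h
    have hs' : s ∈ C x r ∪ C r y := by rw [H.seg_union hx hy hr]; exact hs
    rcases hs' with h' | h'
    · exact h'
    · have h1 : s ∈ C y r := by rw [← H.seg_symm hrU hy]; exact h'
      have h2 : r ∈ C y s := by rw [← H.seg_symm hsU hy]; exact h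
      have hsr : s = r := H.noswap hy hrU hsU h1 h2
      rw [hsr]; exact H.mem_right x hx r hrU

lemma total {x y s t : Y} (hx : x ∈ U) (hy : y ∈ U) (hs : s ∈ C x y) (ht : t ∈ C x y) :
    s ∈ C x t ∨ t ∈ C x s := by
  have hs' : s ∈ C x t ∪ C t y := by rw [H.seg_union hx hy ht]; exact hs
  rcases hs' with h' | h'
  · exact Or.inl h'
  · exact Or.inr ((H.le_iff hx hy ht hs).2 h')

lemma mem_interval {x y a b r : Y} (hx : x ∈ U) (hy : y ∈ U)
    (ha : a ∈ C x y) (hb : b ∈ C x y) (hr : r ∈ C x y)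
    (h1 : a ∈ C x r) (h2 : r ∈ C x b) : r ∈ C a b := by
  have haU : a ∈ U := H.memU hx hy ha
  have hbU : b ∈ U := H.memU hx hy hb
  have hrU : r ∈ U := H.memU hx hy hr
  have hsub : C x r ⊆ C x b := H.convex x hx b hbU x (H.mem_left x hx b hbU) r h2
  have haxb : a ∈ C x b := hsub h1
  have hbay : b ∈ C a y := (H.le_iff hx hy ha hb).1 haxb
  have hray : r ∈ C a y := (H.le_iff hx hy ha hr).1 h1
  have hu : C a b ∪ C b y = C a y := H.seg_union haU hy hbay
  have hr' : r ∈ C a b ∪ C b y := by rw [hu]; exact hray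
  rcases hr' with h' | h'
  · exact h'
  · have hbr : b ∈ C x r := (H.le_iff hx hy hb hr).2 h'
    have hrb : r = b := H.noswap hx hbU hrU h2 hbr
    rw [hrb]; exact H.mem_right a haU b hbU

/-- In any open neighborhood of a non-minimal point of a segment there is a strictly
smaller point of the segment. -/
lemma exists_lt {x y t : Y} (hx : x ∈ U) (hy : y ∈ U) (ht : t ∈ C x y) (htx : t ≠ x)
    {V' : Set Y} (hV' : IsOpen V') (htV : t ∈ V') :
    ∃ a, a ∈ V' ∧ a ∈ C x y ∧ a ∈ C x t ∧ a ≠ t := by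
  by_contra hcon
  push_neg at hcon
  have htU : t ∈ U := H.memU hx hy ht
  have hk : ∀ s, s ∈ V' → s ∈ C x y → t ∈ C x s := by
    intro s hsV hsS
    rcases H.total hx hy hsS ht with h | h
    · have he := hcon s hsV hsS h
      rw [he]; exact H.mem_right x hx t htU
    · exact h
  have hG1 : IsOpen (V' ∪ {s | s ∈ U ∧ t ∉ C y s}) := hV'.union (H.ray_open hy htU)
  have hG2 : IsOpen {s | s ∈ U ∧ t ∉ C x s} := H.ray_open hx htU
  have hcov : C x y ⊆ (V' ∪ {s | s ∈ U ∧ t ∉ C y s}) ∪ {s | s ∈ U ∧ t ∉ C x s} := by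
    intro s hsS
    have hsU : s ∈ U := H.memU hx hy hsS
    by_cases h1 : t ∈ C x s
    · by_cases h2 : t ∈ C y s
      · have h2' : t ∈ C s y := by rw [H.seg_symm hsU hy]; exact h2
        have h3 : s ∈ C x t := (H.le_iff hx hy hsS ht).2 h2'
        have hst : s = t := H.noswap hx htU hsU h3 h1
        exact Or.inl (Or.inl (hst ▸ htV))
      · exact Or.inl (Or.inr ⟨hsU, h2⟩)
    · exact Or.inr ⟨hsU, h1⟩
  have hne1 : (C x y ∩ (V' ∪ {s | s ∈ U ∧ t ∉ C y s})).Nonempty :=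
    ⟨t, ht, Or.inl htV⟩
  have hne2 : (C x y ∩ {s | s ∈ U ∧ t ∉ C x s}).Nonempty := by
    refine ⟨x, H.mem_left x hx y hy, hx, ?_⟩
    rw [H.seg_self hx]
    exact htx
  obtain ⟨z, hzS, hz1, hz2⟩ := H.preconnected x hx y hy _ _ hG1 hG2 hcov hne1 hne2
  rcases hz1 with hzV | ⟨hzU, hzY⟩
  · exact hz2.2 (hk z hzV hzS)
  · rcases H.total hx hy hzS ht with h | h
    · have h' : t ∈ C z y := (H.le_iff hx hy hzS ht).1 h
      rw [H.seg_symm (H.memU hx hy hzS) hy] at h'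
      exact hzY h'
    · exact hz2.2 h

lemma exists_gt {x y t : Y} (hx : x ∈ U) (hy : y ∈ U) (ht : t ∈ C x y) (hty : t ≠ y)
    {V' : Set Y} (hV' : IsOpen V') (htV : t ∈ V') :
    ∃ b, b ∈ V' ∧ b ∈ C x y ∧ t ∈ C x b ∧ b ≠ t := by
  have ht' : t ∈ C y x := by rw [← H.seg_symm hx hy]; exact ht
  obtain ⟨a, haV, haS, hat, hne⟩ := H.exists_lt hy hx ht' hty hV' htV
  have haS' : a ∈ C x y := by rw [H.seg_symm hx hy]; exact haS
  have htU : t ∈ U := H.memU hx hy ht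
  have h1 : a ∈ C t y := by rw [H.seg_symm htU hy]; exact hat
  exact ⟨a, haV, haS', (H.le_iff hx hy ht haS').2 h1, hne⟩

/-- Local structure of segments: any point `t` of a segment with an open neighborhood `N`
admits `a ≤ t ≤ b` on the segment with `C a b ⊆ N` and an open set `G ∋ t` all of whose
segment points lie between `a` and `b`. -/
lemma key_local {x y t : Y} (hx : x ∈ U) (hy : y ∈ U) (ht : t ∈ C x y)
    {N : Set Y} (hN : IsOpen N) (htN : t ∈ N) :
    ∃ a b G, a ∈ C x y ∧ b ∈ C x y ∧ a ∈ C x t ∧ t ∈ C x b ∧ C a b ⊆ N ∧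
      IsOpen G ∧ t ∈ G ∧ ∀ s ∈ G ∩ C x y, a ∈ C x s ∧ s ∈ C x b := by
  have htU : t ∈ U := H.memU hx hy ht
  obtain ⟨V', hV'o, htV', hV'sub, hV'cl⟩ := H.basis t htU N hN htN
  have hleft : ∃ a Gl, a ∈ V' ∧ a ∈ C x y ∧ a ∈ C x t ∧ IsOpen Gl ∧ t ∈ Gl ∧
      ∀ s ∈ Gl ∩ C x y, a ∈ C x s := by
    rcases eq_or_ne t x with rfl | htx
    · exact ⟨t, Set.univ, htV', ht, H.mem_left t htU t htU, isOpen_univ, trivial,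
        fun s hs => H.mem_left t htU s (H.memU htU hy hs.2)⟩
    · obtain ⟨a, haV, haS, hat, hanet⟩ := H.exists_lt hx hy ht htx hV'o htV'
      have haU : a ∈ U := H.memU hx hy haS
      refine ⟨a, {s | s ∈ U ∧ a ∉ C y s}, haV, haS, hat, H.ray_open hy haU, ⟨htU, ?_⟩, ?_⟩
      · intro hmem
        have h1 : a ∈ C t y := by rw [H.seg_symm htU hy]; exact hmem
        have h2 : t ∈ C x a := (H.le_iff hx hy ht haS).2 h1
        exact hanet (H.noswap hx htU haU hat h2)
      · rintro s ⟨⟨hsU, hsray⟩, hsS⟩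
        rcases H.total hx hy hsS haS with h | h
        · exfalso
          have h' : a ∈ C s y := (H.le_iff hx hy hsS haS).1 h
          rw [H.seg_symm hsU hy] at h'
          exact hsray h'
        · exact h
  have hright : ∃ b Gr, b ∈ V' ∧ b ∈ C x y ∧ t ∈ C x b ∧ IsOpen Gr ∧ t ∈ Gr ∧
      ∀ s ∈ Gr ∩ C x y, s ∈ C x b := by
    rcases eq_or_ne t y with rfl | hty
    · exact ⟨t, Set.univ, htV', ht, H.mem_right x hx t htU, isOpen_univ, trivial,
        fun s hs => hs.2⟩
    · obtain ⟨b, hbV, hbS, htb, hbnet⟩ := H.exists_gt hx hy ht hty hV'o htV'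
      have hbU : b ∈ U := H.memU hx hy hbS
      refine ⟨b, {s | s ∈ U ∧ b ∉ C x s}, hbV, hbS, htb, H.ray_open hx hbU, ⟨htU, ?_⟩, ?_⟩
      · intro hmem
        exact hbnet (H.noswap hx htU hbU hmem htb)
      · rintro s ⟨⟨hsU, hsray⟩, hsS⟩
        rcases H.total hx hy hsS hbS with h | h
        · exact h
        · exact absurd h hsray
  obtain ⟨a, Gl, haV, haS, hat, hGlo, htGl, hGl⟩ := hleft
  obtain ⟨b, Gr, hbV, hbS, htb, hGro, htGr, hGr⟩ := hright
  refine ⟨a, b, Gl ∩ Gr, haS, hbS, hat, htb,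
    fun z hz => (hV'sub (hV'cl a haV b hbV hz)).1,
    hGlo.inter hGro, ⟨htGl, htGr⟩,
    fun s hs => ⟨hGl s ⟨hs.1.1, hs.2⟩, hGr s ⟨hs.1.2, hs.2⟩⟩⟩

/-- Segments are compact. -/
lemma seg_compact {x y : Y} (hx : x ∈ U) (hy : y ∈ U) : IsCompact (C x y) := by
  classical
  rw [isCompact_iff_finite_subcover]
  intro ι V hVo hcover
  set P : Y → Prop := fun t => ∃ F : Finset ι, C x t ⊆ ⋃ i ∈ F, V i with hP
  have hloc : ∀ t ∈ C x y, ∃ G, IsOpen G ∧ t ∈ G ∧ ∀ s ∈ G ∩ C x y, (P s ↔ P t) := by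
    intro t htS
    have htU : t ∈ U := H.memU hx hy htS
    obtain ⟨i₀, hi₀⟩ := Set.mem_iUnion.1 (hcover htS)
    obtain ⟨a, b, G, haS, hbS, hat, htb, hab, hGo, htG, hGS⟩ :=
      H.key_local hx hy htS (hVo i₀) hi₀
    have haU : a ∈ U := H.memU hx hy haS
    have hbU : b ∈ U := H.memU hx hy hbS
    have hmemt : t ∈ C a b := H.mem_interval hx hy haS hbS htS hat htb
    have step : ∀ p q : Y, p ∈ C x y → q ∈ C x y → p ∈ C a b → q ∈ C a b → P p → P q := by
      intro p q hpS hqS hpab hqab hPp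
      obtain ⟨F, hF⟩ := hPp
      have hpU : p ∈ U := H.memU hx hy hpS
      have hqU : q ∈ U := H.memU hx hy hqS
      rcases H.total hx hy hqS hpS with h | h
      · exact ⟨F, (H.convex x hx p hpU x (H.mem_left x hx p hpU) q h).trans hF⟩
      · refine ⟨insert i₀ F, ?_⟩
        have hu : C x p ∪ C p q = C x q := H.seg_union hx hqU h
        rw [← hu]
        rintro z (hz | hz)
        · obtain ⟨i, hi, hzi⟩ := Set.mem_iUnion₂.1 (hF hz)
          exact Set.mem_iUnion₂.2 ⟨i, Finset.mem_insert_of_mem hi, hzi⟩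
        · have hzV : z ∈ V i₀ := hab (H.convex a haU b hbU p hpab q hqab hz)
          exact Set.mem_iUnion₂.2 ⟨i₀, Finset.mem_insert_self i₀ F, hzV⟩
    refine ⟨G, hGo, htG, fun s hs => ?_⟩
    obtain ⟨has, hsb⟩ := hGS s hs
    have hsS := hs.2
    have hmems : s ∈ C a b := H.mem_interval hx hy haS hbS hsS has hsb
    exact ⟨step s t hsS htS hmems hmemt, step t s htS hsS hmemt hmems⟩
  set O₁ : Set Y := ⋃₀ {G | IsOpen G ∧ ∀ r ∈ G ∩ C x y, P r} with hO₁def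
  set O₂ : Set Y := ⋃₀ {G | IsOpen G ∧ ∀ r ∈ G ∩ C x y, ¬ P r} with hO₂def
  have hO₁o : IsOpen O₁ := isOpen_sUnion fun G hG => hG.1
  have hO₂o : IsOpen O₂ := isOpen_sUnion fun G hG => hG.1
  have hmem₁ : ∀ t ∈ C x y, P t → t ∈ O₁ := by
    intro t htS hPt
    obtain ⟨G, hGo, htG, hGiff⟩ := hloc t htS
    exact ⟨G, ⟨hGo, fun r hr => (hGiff r hr).2 hPt⟩, htG⟩
  have hmem₂ : ∀ t ∈ C x y, ¬ P t → t ∈ O₂ := by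
    intro t htS hPt
    obtain ⟨G, hGo, htG, hGiff⟩ := hloc t htS
    exact ⟨G, ⟨hGo, fun r hr hPr => hPt ((hGiff r hr).1 hPr)⟩, htG⟩
  have hPx : P x := by
    obtain ⟨i₀, hi₀⟩ := Set.mem_iUnion.1 (hcover (H.mem_left x hx y hy))
    refine ⟨{i₀}, ?_⟩
    rw [H.seg_self hx]
    intro z hz
    rw [Set.mem_singleton_iff.1 hz]
    exact Set.mem_iUnion₂.2 ⟨i₀, Finset.mem_singleton_self i₀, hi₀⟩
  by_cases hPy : P y
  · exact hPy
  · exfalso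
    obtain ⟨z, hzS, hz₁, hz₂⟩ := H.preconnected x hx y hy O₁ O₂ hO₁o hO₂o
      (fun t htS => (em (P t)).elim (fun h => Or.inl (hmem₁ t htS h))
        (fun h => Or.inr (hmem₂ t htS h)))
      ⟨x, H.mem_left x hx y hy, hmem₁ x (H.mem_left x hx y hy) hPx⟩
      ⟨y, H.mem_right x hx y hy, hmem₂ y (H.mem_right x hx y hy) hPy⟩
    obtain ⟨G, ⟨hGo, hGP⟩, hzG⟩ := hz₁
    obtain ⟨G', ⟨hGo', hGP'⟩, hzG'⟩ := hz₂
    exact hGP' z ⟨hzG', hzS⟩ (hGP z ⟨hzG, hzS⟩)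

/-- Separating a point of `U` from a compact subset of `U` not containing it. -/
lemma sep_point {p : Y} (hp : p ∈ U) {K : Set Y} (hK : IsCompact K) (hKU : K ⊆ U)
    (hpK : p ∉ K) :
    ∃ O₁ O₂ : Set Y, IsOpen O₁ ∧ IsOpen O₂ ∧ p ∈ O₁ ∧ K ⊆ O₂ ∧ O₁ ∩ O₂ ∩ U = ∅ := by
  classical
  have hchoice : ∀ q : K, ∃ VW : Set Y × Set Y, IsOpen VW.1 ∧ IsOpen VW.2 ∧ p ∈ VW.1 ∧
      (q : Y) ∈ VW.2 ∧ VW.1 ∩ VW.2 ∩ U = ∅ := by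
    rintro ⟨q, hq⟩
    have hne : p ≠ q := fun h => hpK (h ▸ hq)
    obtain ⟨V, W', h1, h2, h3, h4, h5⟩ := H.t2 p hp q (hKU hq) hne
    exact ⟨(V, W'), h1, h2, h3, h4, h5⟩
  choose f h1 h2 h3 h4 h5 using hchoice
  obtain ⟨t, ht⟩ := hK.elim_finite_subcover (fun q : K => (f q).2) (fun q => h2 q)
    (fun z hz => Set.mem_iUnion.2 ⟨⟨z, hz⟩, h4 ⟨z, hz⟩⟩)
  refine ⟨⋂ q ∈ t, (f q).1, ⋃ q ∈ t, (f q).2,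
    isOpen_biInter_finset (fun q _ => h1 q), isOpen_biUnion (fun q _ => h2 q),
    Set.mem_iInter₂.2 (fun q _ => h3 q), ht, ?_⟩
  apply Set.eq_empty_iff_forall_notMem.2
  rintro z ⟨⟨hz1, hz2⟩, hzU⟩
  obtain ⟨q, hq, hzq⟩ := Set.mem_iUnion₂.1 hz2
  exact Set.eq_empty_iff_forall_notMem.1 (h5 q) z ⟨⟨Set.mem_iInter₂.1 hz1 q hq, hzq⟩, hzU⟩

/-- Separating two disjoint compact subsets of `U`. -/
lemma sep_compact {K₁ K₂ : Set Y} (hK₁ : IsCompact K₁) (hK₂ : IsCompact K₂)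
    (h1U : K₁ ⊆ U) (h2U : K₂ ⊆ U) (hdisj : K₁ ∩ K₂ = ∅) :
    ∃ O₁ O₂ : Set Y, IsOpen O₁ ∧ IsOpen O₂ ∧ K₁ ⊆ O₁ ∧ K₂ ⊆ O₂ ∧ O₁ ∩ O₂ ∩ U = ∅ := by
  classical
  have hchoice : ∀ p : K₁, ∃ OO : Set Y × Set Y, IsOpen OO.1 ∧ IsOpen OO.2 ∧
      (p : Y) ∈ OO.1 ∧ K₂ ⊆ OO.2 ∧ OO.1 ∩ OO.2 ∩ U = ∅ := by
    rintro ⟨p, hp⟩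
    have hpK₂ : p ∉ K₂ := fun h => Set.eq_empty_iff_forall_notMem.1 hdisj p ⟨hp, h⟩
    obtain ⟨O₁, O₂, a, b, c, d, e⟩ := H.sep_point (h1U hp) hK₂ h2U hpK₂
    exact ⟨(O₁, O₂), a, b, c, d, e⟩
  choose f h1 h2 h3 h4 h5 using hchoice
  obtain ⟨t, ht⟩ := hK₁.elim_finite_subcover (fun p : K₁ => (f p).1) (fun p => h1 p)
    (fun z hz => Set.mem_iUnion.2 ⟨⟨z, hz⟩, h3 ⟨z, hz⟩⟩)
  refine ⟨⋃ p ∈ t, (f p).1, ⋂ p ∈ t, (f p).2,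
    isOpen_biUnion (fun p _ => h1 p), isOpen_biInter_finset (fun p _ => h2 p),
    ht, Set.subset_iInter₂ (fun p _ => h4 p), ?_⟩
  apply Set.eq_empty_iff_forall_notMem.2
  rintro z ⟨⟨hz1, hz2⟩, hzU⟩
  obtain ⟨p, hpt, hzp⟩ := Set.mem_iUnion₂.1 hz1
  exact Set.eq_empty_iff_forall_notMem.1 (h5 p) z ⟨⟨hzp, Set.mem_iInter₂.1 hz2 p hpt⟩, hzU⟩

end IsConvexitySpaceOn

end Aux

/-- Proposition 6: Let `Y` be a topological space equipped with a local
convexity structure.  Then the closure of any convex subset of `Y` is convex. -/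
theorem stmt_10 {Y : Type*} [TopologicalSpace Y] (𝒱 : LocalConvexityStructure Y)
    (A : Set Y) (hA : 𝒱.IsConvexSet A) :
    𝒱.IsConvexSet (closure A) := by
  intro U hU u hu v hv
  have H := 𝒱.convexity U hU
  obtain ⟨huA, huU⟩ := hu
  obtain ⟨hvA, hvU⟩ := hv
  intro w hw
  have hwU : w ∈ U := H.memU huU hvU hw
  refine ⟨?_, hwU⟩
  by_contra hwA
  obtain ⟨B, hBo, hwB, hBsub, hBseg⟩ :=
    H.basis w hwU (closure A)ᶜ isClosed_closure.isOpen_compl hwA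
  have hBA : ∀ z ∈ B, z ∉ closure A := fun z hz => (hBsub hz).1
  have hK₁ : IsCompact (𝒱.seg U u w \ B) := (H.seg_compact huU hwU).diff hBo
  have hK₂ : IsCompact (𝒱.seg U w v \ B) := (H.seg_compact hwU hvU).diff hBo
  have h1U : 𝒱.seg U u w \ B ⊆ U := fun z hz => H.memU huU hwU hz.1
  have h2U : 𝒱.seg U w v \ B ⊆ U := fun z hz => H.memU hwU hvU hz.1
  have hdisj : (𝒱.seg U u w \ B) ∩ (𝒱.seg U w v \ B) = ∅ := by
    apply Set.eq_empty_iff_forall_notMem.2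
    rintro z ⟨⟨hz1, hzB⟩, hz2, _⟩
    have hzw : z = w := H.seg_inter huU hvU hw hz1 hz2
    rw [hzw] at hzB
    exact hzB hwB
  obtain ⟨O₁, O₂, hO₁, hO₂, hS₁, hS₂, hOdisj⟩ := H.sep_compact hK₁ hK₂ h1U h2U hdisj
  have hWo : IsOpen (O₁ ∪ O₂ ∪ B) := (hO₁.union hO₂).union hBo
  have hWsub : 𝒱.seg U u v ⊆ O₁ ∪ O₂ ∪ B := by
    intro z hz
    have hz' : z ∈ 𝒱.seg U u w ∪ 𝒱.seg U w v := by
      rw [H.seg_union huU hvU hw]; exact hz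
    by_cases hzB : z ∈ B
    · exact Or.inr hzB
    · rcases hz' with h | h
      · exact Or.inl (Or.inl (hS₁ ⟨h, hzB⟩))
      · exact Or.inl (Or.inr (hS₂ ⟨h, hzB⟩))
  obtain ⟨V₁, V₂, hV₁, hV₂, huV₁, hvV₂, hkey⟩ := H.continuity u huU v hvU _ hWo hWsub
  have huO₁ : u ∈ O₁ := hS₁ ⟨H.mem_left u huU w hwU, fun hB => hBA u hB huA⟩
  have hvO₂ : v ∈ O₂ := hS₂ ⟨H.mem_right w hwU v hvU, fun hB => hBA v hB hvA⟩
  obtain ⟨x', ⟨⟨hx'V₁, hx'O₁⟩, hx'U⟩, hx'A⟩ :=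
    _root_.mem_closure_iff.1 huA (V₁ ∩ O₁ ∩ U) ((hV₁.inter hO₁).inter H.isOpen)
      ⟨⟨huV₁, huO₁⟩, huU⟩
  obtain ⟨y', ⟨⟨hy'V₂, hy'O₂⟩, hy'U⟩, hy'A⟩ :=
    _root_.mem_closure_iff.1 hvA (V₂ ∩ O₂ ∩ U) ((hV₂.inter hO₂).inter H.isOpen)
      ⟨⟨hvV₂, hvO₂⟩, hvU⟩
  have hT : 𝒱.seg U x' y' ⊆ A ∩ U := hA U hU x' ⟨hx'A, hx'U⟩ y' ⟨hy'A, hy'U⟩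
  have hTW : 𝒱.seg U x' y' ⊆ O₁ ∪ O₂ ∪ B := hkey x' ⟨hx'V₁, hx'U⟩ y' ⟨hy'V₂, hy'U⟩
  have hTB : ∀ z ∈ 𝒱.seg U x' y', z ∉ B := fun z hz hB => hBA z hB (subset_closure (hT hz).1)
  have hTcov : 𝒱.seg U x' y' ⊆ O₁ ∪ O₂ := by
    intro z hz
    rcases hTW hz with h | h
    · exact h
    · exact absurd h (hTB z hz)
  obtain ⟨z, hzT, hzO₁, hzO₂⟩ := H.preconnected x' hx'U y' hy'U O₁ O₂ hO₁ hO₂ hTcov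
    ⟨x', H.mem_left x' hx'U y' hy'U, hx'O₁⟩ ⟨y', H.mem_right x' hx'U y' hy'U, hy'O₂⟩
  exact Set.eq_empty_iff_forall_notMem.1 hOdisj z ⟨⟨hzO₁, hzO₂⟩, (hT hzT).2⟩
end

section
/- Let f : X → Y be a continuous map between topological spaces, where Y carries a local convexity structure. If f is locally convex, then the induced map f# : X^f → Y is locally convex. -/
universe u v w

/-- A continuous map `f : X → Y` into a space with a local convexity structure `𝒱` is
*locally convex* if every `x ∈ X` has an open neighbourhood `U` such that the induced map
`U → f(U)` is open and `f(U)` is a convex subspace of some chart `V ∈ 𝒱`. -/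
def IsLocallyConvexMap {X Y : Type*} [TopologicalSpace X] [TopologicalSpace Y]
    (𝒱 : LocalConvexityStructure Y) (f : X → Y) : Prop :=
  ∀ x : X, ∃ U : Set X, IsOpen U ∧ x ∈ U ∧
    (∀ W : Set X, W ⊆ U → IsOpen W → ∃ O : Set Y, IsOpen O ∧ f '' W = O ∩ f '' U) ∧
    ∃ V ∈ 𝒱.atlas, f '' U ⊆ V ∧ ∀ p ∈ f '' U, ∀ q ∈ f '' U, 𝒱.seg V p q ⊆ f '' U

open Filter Topology Set

/-- If `f` maps open subsets of `U` to relatively open subsets of `f '' U`, then for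
`u ∈ U` the image filter `map f (𝓝 u)` equals `𝓝 (f u) ⊓ 𝓟 (f '' U)`. -/
lemma mapNhds_eq_of_relOpen {X Y : Type*} [TopologicalSpace X] [TopologicalSpace Y]
    (f : X → Y) (hf : Continuous f) {U : Set X} (hU : IsOpen U)
    (himg : ∀ W : Set X, W ⊆ U → IsOpen W → ∃ O : Set Y, IsOpen O ∧ f '' W = O ∩ f '' U)
    {u : X} (hu : u ∈ U) :
    Filter.map f (nhds u) = nhds (f u) ⊓ Filter.principal (f '' U) := by
  apply le_antisymm
  · refine le_inf (hf.continuousAt) ?_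
    rw [Filter.le_principal_iff, Filter.mem_map]
    exact Filter.mem_of_superset (hU.mem_nhds hu) (Set.subset_preimage_image f U)
  · intro S hS
    rw [Filter.mem_map] at hS
    obtain ⟨W, hWsub, hWopen, hWmem⟩ := mem_nhds_iff.1 hS
    obtain ⟨O, hOopen, hOW⟩ := himg (W ∩ U) Set.inter_subset_right (hWopen.inter hU)
    have hfu : f u ∈ O ∩ f '' U := by
      rw [← hOW]; exact ⟨u, ⟨hWmem, hu⟩, rfl⟩
    have : O ∩ f '' U ∈ nhds (f u) ⊓ Filter.principal (f '' U) :=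
      Filter.inter_mem_inf (hOopen.mem_nhds hfu.1) (Filter.mem_principal_self _)
    refine Filter.mem_of_superset this ?_
    rw [← hOW]
    rintro y ⟨w, ⟨hw, _⟩, rfl⟩
    exact hWsub hw
  
/-- If two sets agree on an open neighbourhood of `y`, the corresponding trace filters at
`y` coincide. -/
lemma nhds_inf_principal_congr {Y : Type*} [TopologicalSpace Y] {y : Y} {O A B : Set Y}
    (hO : IsOpen O) (hy : y ∈ O) (hAB : O ∩ A = O ∩ B) :
    nhds y ⊓ Filter.principal A = nhds y ⊓ Filter.principal B := by
  have hOn : nhds y ⊓ Filter.principal O = nhds y :=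
    inf_eq_left.2 (Filter.le_principal_iff.2 (hO.mem_nhds hy))
  calc nhds y ⊓ Filter.principal A = nhds y ⊓ Filter.principal O ⊓ Filter.principal A := by
        rw [hOn]
    _ = nhds y ⊓ Filter.principal (O ∩ A) := by rw [inf_assoc, Filter.inf_principal]
    _ = nhds y ⊓ Filter.principal (O ∩ B) := by rw [hAB]
    _ = nhds y ⊓ Filter.principal O ⊓ Filter.principal B := by
        rw [inf_assoc, Filter.inf_principal]
    _ = nhds y ⊓ Filter.principal B := by rw [hOn]

/-- Proposition 7: Let `f : X → Y` be a continuous map between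
topological spaces, where `Y` carries a local convexity structure.  If `f` is locally
convex, then the induced map `f# : X^f → Y` is locally convex. -/
theorem stmt_11 {X Y : Type*} [TopologicalSpace X] [TopologicalSpace Y]
    (𝒱 : LocalConvexityStructure Y) (f : X → Y) (hf : Continuous f)
    (h : IsLocallyConvexMap 𝒱 f) :
    IsLocallyConvexMap 𝒱 (fSharp f) := by
  intro xbar
  obtain ⟨x, rfl⟩ := Quotient.exists_rep xbar
  obtain ⟨U, hUo, hxU, himg, V, hV, hUV, hconv⟩ := h x
  have hcomp : ∀ z : X, fSharp f (qMap f z) = f z := fun z => rfl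
  have himage : fSharp f '' (qMap f '' U) = f '' U := by
    rw [Set.image_image]; rfl
  refine ⟨qMap f '' U, ?_, ⟨x, hxU, rfl⟩, ?_, V, hV, ?_, ?_⟩
  · -- openness of the saturation
    have : IsOpen (qMap f ⁻¹' (qMap f '' U)) := by
      rw [isOpen_iff_forall_mem_open]
      intro z hz
      obtain ⟨u, huU, hequ⟩ := hz
      have hr : (nhdsSetoid f).r u z := Quotient.exact hequ
      obtain ⟨hfeq, hfil⟩ := hr
      obtain ⟨U', hU'o, hzU', himg', _⟩ := h z
      have hz' := mapNhds_eq_of_relOpen f hf hU'o himg' hzU'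
      have hu' := mapNhds_eq_of_relOpen f hf hUo himg huU
      have hfilters : nhds (f z) ⊓ Filter.principal (f '' U)
          = nhds (f z) ⊓ Filter.principal (f '' U') := by
        rw [← hz', ← hfil, hu', hfeq]
      have h1 : f '' U' ∈ nhds (f z) ⊓ Filter.principal (f '' U) := by
        rw [hfilters]; exact Filter.mem_inf_of_right (Filter.mem_principal_self _)
      have h2 : f '' U ∈ nhds (f z) ⊓ Filter.principal (f '' U') := by
        rw [← hfilters]; exact Filter.mem_inf_of_right (Filter.mem_principal_self _)
      obtain ⟨t₁, ht₁, s₁, hs₁, heq₁⟩ := Filter.mem_inf_iff.1 h1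
      obtain ⟨t₂, ht₂, s₂, hs₂, heq₂⟩ := Filter.mem_inf_iff.1 h2
      rw [Filter.mem_principal] at hs₁ hs₂
      obtain ⟨O₁, hO₁sub, hO₁o, hO₁z⟩ := mem_nhds_iff.1 ht₁
      obtain ⟨O₂, hO₂sub, hO₂o, hO₂z⟩ := mem_nhds_iff.1 ht₂
      set O : Set Y := O₁ ∩ O₂ with hOdef
      have hOo : IsOpen O := hO₁o.inter hO₂o
      have hOz : f z ∈ O := ⟨hO₁z, hO₂z⟩
      have hsub1 : O ∩ f '' U ⊆ f '' U' := by
        intro y hy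
        have : y ∈ t₁ ∩ s₁ := ⟨hO₁sub hy.1.1, hs₁ hy.2⟩
        rw [← heq₁] at this; exact this
      have hsub2 : O ∩ f '' U' ⊆ f '' U := by
        intro y hy
        have : y ∈ t₂ ∩ s₂ := ⟨hO₂sub hy.1.2, hs₂ hy.2⟩
        rw [← heq₂] at this; exact this
      have hgerm : O ∩ f '' U = O ∩ f '' U' :=
        Set.Subset.antisymm (fun y hy => ⟨hy.1, hsub1 hy⟩) (fun y hy => ⟨hy.1, hsub2 hy⟩)
      refine ⟨U' ∩ f ⁻¹' O, ?_, (hU'o.inter (hOo.preimage hf)), ⟨hzU', hOz⟩⟩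
      intro w hw
      have hfw : f w ∈ O ∩ f '' U' := ⟨hw.2, ⟨w, hw.1, rfl⟩⟩
      obtain ⟨uw, huwU, hfuw⟩ := hsub2 hfw
      refine ⟨uw, huwU, Quotient.sound ⟨hfuw, ?_⟩⟩
      rw [mapNhds_eq_of_relOpen f hf hUo himg huwU,
        mapNhds_eq_of_relOpen f hf hU'o himg' hw.1, hfuw]
      exact nhds_inf_principal_congr hOo (hfuw ▸ hfw.1) hgerm
    exact this
  · -- relative openness of images
    intro Wbar hWsub hWopen
    have hWpre : IsOpen (qMap f ⁻¹' Wbar) := hWopen.preimage continuous_quotient_mk'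
    obtain ⟨O, hOo, hOW⟩ := himg (qMap f ⁻¹' Wbar ∩ U) Set.inter_subset_right
      (hWpre.inter hUo)
    refine ⟨O, hOo, ?_⟩
    rw [himage, ← hOW]
    apply Set.Subset.antisymm
    · rintro y ⟨wbar, hwbar, rfl⟩
      obtain ⟨z, rfl⟩ := Quotient.exists_rep wbar
      obtain ⟨u, huU, hequ⟩ := hWsub hwbar
      have hr : (nhdsSetoid f).r u z := Quotient.exact hequ
      refine ⟨u, ⟨?_, huU⟩, hr.1⟩
      show qMap f u ∈ Wbar
      rw [hequ]; exact hwbar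
    · rintro y ⟨w, ⟨hwW, hwU⟩, rfl⟩
      exact ⟨qMap f w, hwW, rfl⟩
  · rw [himage]; exact hUV
  · rw [himage]; exact hconv
end
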